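/- arXiv:1411.7935 — 8 statements merged into one kernel-verified Lean document; each statement's English description precedes it below -/
import Mathlib

section
/- If the linear program max{c^T x : x ∈ ℝ^n, A x ≤ b} is feasible (P = {x : A x ≤ b} is nonempty) and bounded (there is M ∈ ℝ with c^T x ≤ M for all x ∈ P), and rank(A) = n, then the LP has an optimal solution that is a vertex: there exists a vertex x* of P with c^T x* ≥ c^T y for all y ∈ P. -/
open Matrix

/-- The rank of the set of rows of `A` that are active at `x` (i.e. `aᵢᵀ x = bᵢ`). -/
noncomputable def activeRank {m n : ℕ} (A : Matrix (Fin m) (Fin n) ℝ) (b : Fin m → ℝ)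
    (x : Fin n → ℝ) : ℕ :=
  Module.finrank ℝ (Submodule.span ℝ {r : Fin n → ℝ | ∃ i, A i ⬝ᵥ x = b i ∧ r = A i})

/-- `x` is a vertex of the polyhedron `P = {x | A x ≤ b}`:
it is feasible and the rows of `A` active at `x` have rank `n`. -/
def IsVertex {m n : ℕ} (A : Matrix (Fin m) (Fin n) ℝ) (b : Fin m → ℝ)
    (x : Fin n → ℝ) : Prop :=
  A.mulVec x ≤ b ∧ activeRank A b x = n

lemma LP.exists_perp {n : ℕ} (T : Set (Fin n → ℝ))
    (h : Module.finrank ℝ (Submodule.span ℝ T) < n) :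
    ∃ d : Fin n → ℝ, d ≠ 0 ∧ ∀ v ∈ Submodule.span ℝ T, v ⬝ᵥ d = 0 := by
  let S : Submodule ℝ (EuclideanSpace ℝ (Fin n)) := (Submodule.span ℝ T).map
    ((WithLp.linearEquiv 2 ℝ (Fin n → ℝ)).symm : (Fin n → ℝ) →ₗ[ℝ] EuclideanSpace ℝ (Fin n))
  have hfr : Module.finrank ℝ S = Module.finrank ℝ (Submodule.span ℝ T) :=
    LinearEquiv.finrank_map_eq _ _
  have h2 : Sᗮ ≠ ⊥ := by
    intro hb
    have := Submodule.finrank_add_finrank_orthogonal (K := S)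
    rw [hb] at this
    simp [finrank_euclideanSpace_fin] at this
    omega
  obtain ⟨d, hd, hd0⟩ := Submodule.exists_mem_ne_zero_of_ne_bot h2
  refine ⟨WithLp.ofLp d, fun h => hd0 (by simpa using congrArg (WithLp.toLp 2) h), fun v hv => ?_⟩
  have := (Submodule.mem_orthogonal S d).mp hd (WithLp.toLp 2 v) ⟨v, hv, rfl⟩
  simpa [PiLp.inner_apply, RCLike.inner_apply, dotProduct, mul_comm] using this

lemma LP.mulVec_inj {m n : ℕ} (A : Matrix (Fin m) (Fin n) ℝ) (hrank : A.rank = n)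
    (d : Fin n → ℝ) (hd : A.mulVec d = 0) : d = 0 := by
  have h := LinearMap.finrank_range_add_finrank_ker A.mulVecLin
  rw [show Module.finrank ℝ (LinearMap.range A.mulVecLin) = A.rank from rfl, hrank] at h
  simp [Module.finrank_pi] at h
  have hdm : d ∈ LinearMap.ker A.mulVecLin := by simpa [LinearMap.mem_ker] using hd
  rw [h] at hdm
  simpa using hdm

lemma LP.ray_bound {p q M : ℝ} (h : ∀ t : ℝ, 0 ≤ t → p + t * q ≤ M) : q ≤ 0 := by
  by_contra hq
  push_neg at hq
  have ht := h (max 0 ((M - p + 1)/q)) (le_max_left _ _)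
  have h2 : (M - p + 1)/q * q ≤ max 0 ((M - p + 1)/q) * q :=
    mul_le_mul_of_nonneg_right (le_max_right _ _) hq.le
  rw [div_mul_cancel₀ _ hq.ne'] at h2
  linarith

lemma LP.activeRank_le {m n : ℕ} (A : Matrix (Fin m) (Fin n) ℝ) (b : Fin m → ℝ)
    (x : Fin n → ℝ) : activeRank A b x ≤ n := by
  have := Submodule.finrank_le
    (Submodule.span ℝ {r : Fin n → ℝ | ∃ i, A i ⬝ᵥ x = b i ∧ r = A i})
  simpa [activeRank, Module.finrank_pi] using this

lemma LP.step_dir {m n : ℕ} (A : Matrix (Fin m) (Fin n) ℝ) (b : Fin m → ℝ) (c : Fin n → ℝ)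
    (x : Fin n → ℝ) (hx : A.mulVec x ≤ b) (e : Fin n → ℝ)
    (hSe : ∀ v ∈ Submodule.span ℝ {r : Fin n → ℝ | ∃ i, A i ⬝ᵥ x = b i ∧ r = A i}, v ⬝ᵥ e = 0)
    (hce : 0 ≤ c ⬝ᵥ e) (hpos : ∃ i, 0 < A i ⬝ᵥ e) :
    ∃ x', A.mulVec x' ≤ b ∧ c ⬝ᵥ x ≤ c ⬝ᵥ x' ∧ activeRank A b x < activeRank A b x' := by
  classical
  set T : Set (Fin n → ℝ) := {r : Fin n → ℝ | ∃ i, A i ⬝ᵥ x = b i ∧ r = A i} with hT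
  have hact : ∀ i, A i ⬝ᵥ x = b i → A i ⬝ᵥ e = 0 := fun i hi =>
    hSe (A i) (Submodule.subset_span ⟨i, hi, rfl⟩)
  set I : Finset (Fin m) := Finset.univ.filter (fun i => 0 < A i ⬝ᵥ e) with hI
  have hIne : I.Nonempty := by
    obtain ⟨i, hi⟩ := hpos
    exact ⟨i, by simp [hI, hi]⟩
  set t : ℝ := I.inf' hIne (fun i => (b i - A i ⬝ᵥ x) / (A i ⬝ᵥ e)) with ht
  have hslack : ∀ i ∈ I, A i ⬝ᵥ x < b i := by
    intro i hi
    simp only [hI, Finset.mem_filter] at hi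
    exact lt_of_le_of_ne (hx i) (fun h => by have := hact i h; linarith [hi.2])
  have htpos : 0 < t := by
    rw [ht, Finset.lt_inf'_iff]
    intro i hi
    simp only [hI, Finset.mem_filter] at hi
    exact div_pos (by linarith [hslack i (by simp [hI, hi.2])]) hi.2
  obtain ⟨j, hjI, hjt⟩ := Finset.exists_mem_eq_inf' hIne (fun i => (b i - A i ⬝ᵥ x) / (A i ⬝ᵥ e))
  have hje : 0 < A j ⬝ᵥ e := by simpa [hI] using hjI
  refine ⟨x + t • e, ?_, ?_, ?_⟩
  · intro i
    have hmv : A.mulVec (x + t • e) i = A i ⬝ᵥ x + t * (A i ⬝ᵥ e) := by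
      simp [mulVec, dotProduct_add, dotProduct_smul, smul_eq_mul]
    rw [hmv]
    by_cases hie : 0 < A i ⬝ᵥ e
    · have hiI : i ∈ I := by simp [hI, hie]
      have := Finset.inf'_le (fun i => (b i - A i ⬝ᵥ x) / (A i ⬝ᵥ e)) hiI
      rw [← ht] at this
      have := (le_div_iff₀ hie).mp this
      linarith
    · push_neg at hie
      have : t * (A i ⬝ᵥ e) ≤ 0 := mul_nonpos_of_nonneg_of_nonpos htpos.le hie
      have hxi := hx i
      have hxi' : (A *ᵥ x) i = A i ⬝ᵥ x := rfl
      rw [hxi'] at hxi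
      linarith
  · have : c ⬝ᵥ (x + t • e) = c ⬝ᵥ x + t * (c ⬝ᵥ e) := by
      simp [dotProduct_add, dotProduct_smul, smul_eq_mul]
    nlinarith
  · have hTsub : T ⊆ {r : Fin n → ℝ | ∃ i, A i ⬝ᵥ (x + t • e) = b i ∧ r = A i} := by
      rintro r ⟨i, hi, rfl⟩
      exact ⟨i, by simp [dotProduct_add, dotProduct_smul, smul_eq_mul, hi, hact i hi], rfl⟩
    have hle : Submodule.span ℝ T ≤
        Submodule.span ℝ {r : Fin n → ℝ | ∃ i, A i ⬝ᵥ (x + t • e) = b i ∧ r = A i} :=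
      Submodule.span_mono hTsub
    have hjact : A j ⬝ᵥ (x + t • e) = b j := by
      have : A j ⬝ᵥ (x + t • e) = A j ⬝ᵥ x + t * (A j ⬝ᵥ e) := by
        simp [dotProduct_add, dotProduct_smul, smul_eq_mul]
      rw [this, ht, hjt]
      field_simp
      ring
    have hjmem : A j ∈ Submodule.span ℝ {r : Fin n → ℝ | ∃ i, A i ⬝ᵥ (x + t • e) = b i ∧ r = A i} :=
      Submodule.subset_span ⟨j, hjact, rfl⟩
    have hjnot : A j ∉ Submodule.span ℝ T := fun h => by
      have := hSe (A j) h; linarith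
    have hlt : Submodule.span ℝ T <
        Submodule.span ℝ {r : Fin n → ℝ | ∃ i, A i ⬝ᵥ (x + t • e) = b i ∧ r = A i} :=
      lt_of_le_of_ne hle (fun h => hjnot (h ▸ hjmem))
    exact Submodule.finrank_lt_finrank_of_lt hlt

/-- If `x` is feasible but not at full active rank, we can strictly increase the
active rank without decreasing the objective. -/
lemma LP.step {m n : ℕ} (A : Matrix (Fin m) (Fin n) ℝ) (b : Fin m → ℝ) (c : Fin n → ℝ)
    (M : ℝ) (hbdd : ∀ x : Fin n → ℝ, A.mulVec x ≤ b → c ⬝ᵥ x ≤ M)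
    (hrank : A.rank = n)
    (x : Fin n → ℝ) (hx : A.mulVec x ≤ b) (hlt : activeRank A b x < n) :
    ∃ x', A.mulVec x' ≤ b ∧ c ⬝ᵥ x ≤ c ⬝ᵥ x' ∧ activeRank A b x < activeRank A b x' := by
  obtain ⟨d0, hd0ne, hd0perp⟩ := LP.exists_perp
    {r : Fin n → ℝ | ∃ i, A i ⬝ᵥ x = b i ∧ r = A i} hlt
  -- WLOG 0 ≤ c ⬝ᵥ d
  obtain ⟨d, hdne, hdperp, hcd⟩ :
      ∃ d : Fin n → ℝ, d ≠ 0 ∧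
        (∀ v ∈ Submodule.span ℝ {r : Fin n → ℝ | ∃ i, A i ⬝ᵥ x = b i ∧ r = A i}, v ⬝ᵥ d = 0)
        ∧ 0 ≤ c ⬝ᵥ d := by
    rcases le_or_gt 0 (c ⬝ᵥ d0) with h | h
    · exact ⟨d0, hd0ne, hd0perp, h⟩
    · refine ⟨-d0, neg_ne_zero.mpr hd0ne, fun v hv => ?_, ?_⟩
      · rw [dotProduct_neg, hd0perp v hv, neg_zero]
      · rw [dotProduct_neg]; linarith
  have hne : ∃ i, A i ⬝ᵥ d ≠ 0 := by
    by_contra hall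
    push_neg at hall
    exact hdne (LP.mulVec_inj A hrank d (funext fun i => hall i))
  by_cases hpos : ∃ i, 0 < A i ⬝ᵥ d
  · exact LP.step_dir A b c x hx d hdperp hcd hpos
  · -- all A i ⬝ᵥ d ≤ 0 : the ray x + t d stays feasible
    push_neg at hpos
    have hray : ∀ t : ℝ, 0 ≤ t → A.mulVec (x + t • d) ≤ b := by
      intro t htn i
      have hmv : A.mulVec (x + t • d) i = A i ⬝ᵥ x + t * (A i ⬝ᵥ d) := by
        simp [mulVec, dotProduct_add, dotProduct_smul, smul_eq_mul]
      have hxi : A i ⬝ᵥ x ≤ b i := hx i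
      have : t * (A i ⬝ᵥ d) ≤ 0 := mul_nonpos_of_nonneg_of_nonpos htn (hpos i)
      rw [hmv]; dsimp only; linarith
    have hcd0 : c ⬝ᵥ d ≤ 0 := by
      apply LP.ray_bound (p := c ⬝ᵥ x) (M := M)
      intro t htn
      have := hbdd (x + t • d) (hray t htn)
      simpa [dotProduct_add, dotProduct_smul, smul_eq_mul] using this
    have hcd' : c ⬝ᵥ (-d) = 0 := by rw [dotProduct_neg]; linarith
    refine LP.step_dir A b c x hx (-d) (fun v hv => ?_) (le_of_eq hcd'.symm) ?_
    · rw [dotProduct_neg, hdperp v hv, neg_zero]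
    · obtain ⟨i, hi⟩ := hne
      exact ⟨i, by rw [dotProduct_neg]; cases lt_or_gt_of_ne hi with
        | inl h => linarith
        | inr h => exact absurd (hpos i) (not_le.mpr h)⟩

/-- From any feasible point we can reach a vertex without decreasing the objective. -/
lemma LP.reach_vertex {m n : ℕ} (A : Matrix (Fin m) (Fin n) ℝ) (b : Fin m → ℝ) (c : Fin n → ℝ)
    (M : ℝ) (hbdd : ∀ x : Fin n → ℝ, A.mulVec x ≤ b → c ⬝ᵥ x ≤ M)
    (hrank : A.rank = n) :
    ∀ k : ℕ, ∀ x : Fin n → ℝ, A.mulVec x ≤ b → n ≤ activeRank A b x + k →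
      ∃ v, IsVertex A b v ∧ c ⬝ᵥ x ≤ c ⬝ᵥ v := by
  intro k
  induction k with
  | zero =>
    intro x hx hk
    exact ⟨x, ⟨hx, le_antisymm (LP.activeRank_le A b x) (by omega)⟩, le_refl _⟩
  | succ k ih =>
    intro x hx hk
    by_cases hn : activeRank A b x = n
    · exact ⟨x, ⟨hx, hn⟩, le_refl _⟩
    · have hlt : activeRank A b x < n := lt_of_le_of_ne (LP.activeRank_le A b x) hn
      obtain ⟨x', hx', hcx', hr'⟩ := LP.step A b c M hbdd hrank x hx hlt
      obtain ⟨v, hv, hcv⟩ := ih x' hx' (by omega)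
      exact ⟨v, hv, le_trans hcx' hcv⟩

/-- The set of vertices is finite. -/
lemma LP.vertex_finite {m n : ℕ} (A : Matrix (Fin m) (Fin n) ℝ) (b : Fin m → ℝ) :
    {x : Fin n → ℝ | IsVertex A b x}.Finite := by
  classical
  have hinj : Set.InjOn (fun x => {i : Fin m | A i ⬝ᵥ x = b i})
      {x : Fin n → ℝ | IsVertex A b x} := by
    intro x hx y hy hxy
    simp only [Set.mem_setOf_eq] at hx hy
    -- the active rows at x span everything
    have hspan : Submodule.span ℝ {r : Fin n → ℝ | ∃ i, A i ⬝ᵥ x = b i ∧ r = A i} = ⊤ := by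
      apply Submodule.eq_top_of_finrank_eq
      rw [show Module.finrank ℝ
        (Submodule.span ℝ {r : Fin n → ℝ | ∃ i, A i ⬝ᵥ x = b i ∧ r = A i})
        = activeRank A b x from rfl, hx.2]
      simp [Module.finrank_pi]
    set w : Fin n → ℝ := x - y with hw
    let φ : (Fin n → ℝ) →ₗ[ℝ] ℝ :=
      { toFun := fun v => v ⬝ᵥ w
        map_add' := fun a b => add_dotProduct a b w
        map_smul' := fun r a => smul_dotProduct r a w }
    have hker : Submodule.span ℝ {r : Fin n → ℝ | ∃ i, A i ⬝ᵥ x = b i ∧ r = A i}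
        ≤ LinearMap.ker φ := by
      rw [Submodule.span_le]
      rintro r ⟨i, hi, rfl⟩
      have hiy : A i ⬝ᵥ y = b i := (Set.ext_iff.mp hxy i).mp hi
      simp only [SetLike.mem_coe, LinearMap.mem_ker]
      show A i ⬝ᵥ w = 0
      rw [hw, dotProduct_sub, hi, hiy, sub_self]
    rw [hspan, top_le_iff] at hker
    have hww : w ⬝ᵥ w = 0 := by
      have hm : w ∈ LinearMap.ker φ := hker ▸ Submodule.mem_top
      exact LinearMap.mem_ker.mp hm
    have : w = 0 := by
      by_contra hne
      exact hne ((dotProduct_self_eq_zero).mp hww)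
    have := sub_eq_zero.mp this
    exact this
  exact Set.Finite.of_finite_image (Set.toFinite _) hinj

/-- If the LP `max {cᵀx : Ax ≤ b}` is feasible and bounded and `rank A = n`,
then it has an optimal solution that is a vertex. -/
theorem lp_feasible_bounded_has_optimal_vertex {m n : ℕ}
    (A : Matrix (Fin m) (Fin n) ℝ) (b : Fin m → ℝ) (c : Fin n → ℝ)
    (hfeas : ∃ x : Fin n → ℝ, A.mulVec x ≤ b)
    (hbdd : ∃ M : ℝ, ∀ x : Fin n → ℝ, A.mulVec x ≤ b → c ⬝ᵥ x ≤ M)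
    (hrank : A.rank = n) :
    ∃ xstar : Fin n → ℝ, IsVertex A b xstar ∧
      ∀ y : Fin n → ℝ, A.mulVec y ≤ b → c ⬝ᵥ y ≤ c ⬝ᵥ xstar := by
  obtain ⟨x0, hx0⟩ := hfeas
  obtain ⟨M, hM⟩ := hbdd
  have hV : {x : Fin n → ℝ | IsVertex A b x}.Finite := LP.vertex_finite A b
  have hVne : {x : Fin n → ℝ | IsVertex A b x}.Nonempty := by
    obtain ⟨v, hv, _⟩ := LP.reach_vertex A b c M hM hrank n x0 hx0 (Nat.le_add_left _ _)
    exact ⟨v, hv⟩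
  obtain ⟨xstar, hxstar, hmax⟩ := Set.exists_max_image _ (fun x => c ⬝ᵥ x) hV hVne
  refine ⟨xstar, hxstar, fun y hy => ?_⟩
  obtain ⟨v, hv, hcv⟩ := LP.reach_vertex A b c M hM hrank n y hy (Nat.le_add_left _ _)
  exact le_trans hcv (hmax v hv)
end

section
/- Two distinct vertices x1 ≠ x2 of P = {x ∈ ℝ^n : A x ≤ b} are adjacent if and only if there exists c ∈ ℝ^n such that the set of maximizers of c^T x over P is exactly the line segment spanned by x1 and x2. -/
open Matrix

/-- Two vertices are adjacent if there are `n - 1` linearly independent rows of `A`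
whose constraints are active at both. -/
def AdjacentVertices {m n : ℕ} (A : Matrix (Fin m) (Fin n) ℝ) (b : Fin m → ℝ)
    (x₁ x₂ : Fin n → ℝ) : Prop :=
  ∃ S : Finset (Fin m), S.card = n - 1 ∧
    LinearIndependent ℝ (fun i : S => A i.1) ∧
    ∀ i ∈ S, A i ⬝ᵥ x₁ = b i ∧ A i ⬝ᵥ x₂ = b i


open Module Submodule

section auxlemmas
variable {n : ℕ}

noncomputable def dotL (d : Fin n → ℝ) : (Fin n → ℝ) →ₗ[ℝ] ℝ where
  toFun w := w ⬝ᵥ d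
  map_add' u v := add_dotProduct u v d
  map_smul' r u := smul_dotProduct r u d

@[simp] lemma dotL_apply (d w : Fin n → ℝ) : dotL d w = w ⬝ᵥ d := rfl

lemma finrank_ker_dotL {d : Fin n → ℝ} (hd : d ≠ 0) :
    finrank ℝ (LinearMap.ker (dotL d)) = n - 1 := by
  have hdd : d ⬝ᵥ d ≠ 0 := fun h0 => hd (dotProduct_self_eq_zero.mp h0)
  have hsurj : LinearMap.range (dotL d) = ⊤ := by
    rw [LinearMap.range_eq_top]
    intro r
    refine ⟨(r / (d ⬝ᵥ d)) • d, ?_⟩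
    simp only [dotL_apply, smul_dotProduct, smul_eq_mul]
    field_simp
  have h := LinearMap.finrank_range_add_finrank_ker (dotL d)
  rw [hsurj, finrank_top] at h
  simp only [Module.finrank_self, Module.finrank_fin_fun] at h
  omega

lemma eq_smul_of_dot {d v : Fin n → ℝ} (hd : d ≠ 0)
    (h : ∀ w : Fin n → ℝ, w ⬝ᵥ d = 0 → w ⬝ᵥ v = 0) : ∃ t : ℝ, v = t • d := by
  have hdd : d ⬝ᵥ d ≠ 0 := fun h0 => hd (dotProduct_self_eq_zero.mp h0)
  set t := (d ⬝ᵥ v) / (d ⬝ᵥ d) with ht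
  refine ⟨t, ?_⟩
  set w := v - t • d with hw
  have hwd : w ⬝ᵥ d = 0 := by
    rw [hw, sub_dotProduct, smul_dotProduct, smul_eq_mul, ht, dotProduct_comm v d]
    field_simp
    ring
  have hwv : w ⬝ᵥ v = 0 := h w hwd
  have hww : w ⬝ᵥ w = w ⬝ᵥ v - t * (w ⬝ᵥ d) := by
    conv_lhs => rw [hw]
    rw [dotProduct_sub, dotProduct_smul, smul_eq_mul]
  have hww0 : w ⬝ᵥ w = 0 := by rw [hww, hwv, hwd]; ring
  have hw0 : w = 0 := dotProduct_self_eq_zero.mp hww0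
  have h0 : v - t • d = 0 := hw0
  exact sub_eq_zero.mp h0

lemma sum_dotProduct' {m : ℕ} (S : Finset (Fin m)) (f : Fin m → Fin n → ℝ) (y : Fin n → ℝ) :
    (∑ i ∈ S, f i) ⬝ᵥ y = ∑ i ∈ S, f i ⬝ᵥ y := by
  classical
  induction S using Finset.induction with
  | empty => simp
  | insert _ _ h ih => rw [Finset.sum_insert h, Finset.sum_insert h, add_dotProduct, ih]

end auxlemmas

lemma exists_active_nonorth {m n : ℕ} (A : Matrix (Fin m) (Fin n) ℝ) (b : Fin m → ℝ)
    {x d : Fin n → ℝ} (hd : d ≠ 0) (hn : 0 < n) (hx : IsVertex A b x) :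
    ∃ k, A k ⬝ᵥ x = b k ∧ A k ⬝ᵥ d ≠ 0 := by
  by_contra hcon
  push_neg at hcon
  have hsub : {r : Fin n → ℝ | ∃ i, A i ⬝ᵥ x = b i ∧ r = A i} ⊆
      (LinearMap.ker (dotL d) : Set (Fin n → ℝ)) := by
    rintro r ⟨i, hi, rfl⟩
    simpa [LinearMap.mem_ker] using hcon i hi
  have hle : Submodule.span ℝ {r : Fin n → ℝ | ∃ i, A i ⬝ᵥ x = b i ∧ r = A i} ≤
      LinearMap.ker (dotL d) := Submodule.span_le.mpr hsub
  have h1 : activeRank A b x ≤ n - 1 := by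
    unfold activeRank
    calc Module.finrank ℝ (Submodule.span ℝ {r : Fin n → ℝ | ∃ i, A i ⬝ᵥ x = b i ∧ r = A i})
        ≤ Module.finrank ℝ (LinearMap.ker (dotL d)) := Submodule.finrank_mono hle
      _ = n - 1 := finrank_ker_dotL hd
  have h2 := hx.2
  omega

lemma forward_dir {m n : ℕ} (A : Matrix (Fin m) (Fin n) ℝ) (b : Fin m → ℝ)
    (x₁ x₂ : Fin n → ℝ) (hne : x₁ ≠ x₂)
    (h₁ : IsVertex A b x₁) (h₂ : IsVertex A b x₂)
    (hadj : AdjacentVertices A b x₁ x₂) :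
    ∃ c : Fin n → ℝ,
      {x : Fin n → ℝ | A.mulVec x ≤ b ∧
          ∀ y : Fin n → ℝ, A.mulVec y ≤ b → c ⬝ᵥ y ≤ c ⬝ᵥ x} = segment ℝ x₁ x₂ := by
  obtain ⟨S, hScard, hSli, hSact⟩ := hadj
  have hn : 0 < n := by
    rcases Nat.eq_zero_or_pos n with h | h
    · exfalso; apply hne; subst h; exact Subsingleton.elim x₁ x₂
    · exact h
  set d : Fin n → ℝ := x₂ - x₁ with hd_def
  have hd : d ≠ 0 := sub_ne_zero.mpr (Ne.symm hne)
  set V := Submodule.span ℝ (Set.range fun i : S => A i.1) with hV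
  have hVrank : finrank ℝ V = n - 1 := by
    rw [hV, finrank_span_eq_card hSli, Fintype.card_coe, hScard]
  have hVle : V ≤ LinearMap.ker (dotL d) := by
    rw [hV, Submodule.span_le]
    rintro _ ⟨i, rfl⟩
    have h1 := (hSact i.1 i.2).1
    have h2 := (hSact i.1 i.2).2
    simp only [SetLike.mem_coe, LinearMap.mem_ker, dotL_apply]
    rw [hd_def, dotProduct_sub, h1, h2, sub_self]
  have hVeq : V = LinearMap.ker (dotL d) :=
    Submodule.eq_of_le_of_finrank_eq hVle (by rw [hVrank, finrank_ker_dotL hd])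
  set c := ∑ i ∈ S, A i with hc
  refine ⟨c, ?_⟩
  have hcdot : ∀ y : Fin n → ℝ, c ⬝ᵥ y = ∑ i ∈ S, A i ⬝ᵥ y :=
    fun y => sum_dotProduct' S (fun i => A i) y
  have hx₁P : ∀ i, A i ⬝ᵥ x₁ ≤ b i := fun i => h₁.1 i
  have hx₂P : ∀ i, A i ⬝ᵥ x₂ ≤ b i := fun i => h₂.1 i
  have hc1 : c ⬝ᵥ x₁ = ∑ i ∈ S, b i := by
    rw [hcdot]; exact Finset.sum_congr rfl fun i hi => (hSact i hi).1
  have hmax : ∀ y : Fin n → ℝ, A.mulVec y ≤ b → c ⬝ᵥ y ≤ ∑ i ∈ S, b i := by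
    intro y hy; rw [hcdot]
    exact Finset.sum_le_sum fun i _ => hy i
  ext x
  constructor
  · rintro ⟨hxP, hxopt⟩
    have hxP' : ∀ i, A i ⬝ᵥ x ≤ b i := fun i => hxP i
    have hcx : c ⬝ᵥ x = ∑ i ∈ S, b i := by
      refine le_antisymm (hmax x hxP) ?_
      calc ∑ i ∈ S, b i = c ⬝ᵥ x₁ := hc1.symm
        _ ≤ c ⬝ᵥ x := hxopt x₁ h₁.1
    have hact : ∀ i ∈ S, A i ⬝ᵥ x = b i := by
      have hsum : ∑ i ∈ S, A i ⬝ᵥ x = ∑ i ∈ S, b i := by rw [← hcdot x, hcx]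
      exact (Finset.sum_eq_sum_iff_of_le fun i _ => hxP' i).mp hsum
    have hkey : ∀ w : Fin n → ℝ, w ⬝ᵥ d = 0 → w ⬝ᵥ (x - x₁) = 0 := by
      intro w hw
      have hwV : w ∈ V := by
        rw [hVeq]; exact LinearMap.mem_ker.mpr (by simpa using hw)
      have hle2 : V ≤ LinearMap.ker (dotL (x - x₁)) := by
        rw [hV, Submodule.span_le]
        rintro _ ⟨i, rfl⟩
        simp only [SetLike.mem_coe, LinearMap.mem_ker, dotL_apply]
        rw [dotProduct_sub, hact i.1 i.2, (hSact i.1 i.2).1, sub_self]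
      simpa using LinearMap.mem_ker.mp (hle2 hwV)
    obtain ⟨t, htx⟩ := eq_smul_of_dot hd hkey
    have hxeq : x = x₁ + t • d := by
      rw [← htx]; abel
    obtain ⟨k, hk_act, hk⟩ := exists_active_nonorth A b hd hn h₁
    have hk_neg : A k ⬝ᵥ d < 0 := by
      have h2 : A k ⬝ᵥ d ≤ 0 := by
        have h3 := hx₂P k
        rw [hd_def, dotProduct_sub, hk_act]
        linarith
      exact lt_of_le_of_ne h2 hk
    have ht0 : 0 ≤ t := by
      have h4 : A k ⬝ᵥ x = b k + t * (A k ⬝ᵥ d) := by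
        rw [hxeq, dotProduct_add, dotProduct_smul, hk_act, smul_eq_mul]
      have h5 := hxP' k
      nlinarith
    obtain ⟨l, hl_act, hl⟩ := exists_active_nonorth A b hd hn h₂
    have hl_pos : 0 < A l ⬝ᵥ d := by
      have h2 : 0 ≤ A l ⬝ᵥ d := by
        have h3 := hx₁P l
        rw [hd_def, dotProduct_sub, hl_act]
        linarith
      exact lt_of_le_of_ne h2 (Ne.symm hl)
    have ht1 : t ≤ 1 := by
      have hx2 : x₂ = x₁ + d := by rw [hd_def]; abel
      have h4 : A l ⬝ᵥ x = b l + (t - 1) * (A l ⬝ᵥ d) := by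
        have : x = x₂ + (t - 1) • d := by rw [hxeq, hx2]; module
        rw [this, dotProduct_add, dotProduct_smul, hl_act, smul_eq_mul]
      have h5 := hxP' l
      nlinarith
    refine ⟨1 - t, t, by linarith, ht0, by ring, ?_⟩
    rw [hxeq, hd_def]; module
  · rintro ⟨u, v, hu, hv, huv, rfl⟩
    have hyP : A.mulVec (u • x₁ + v • x₂) ≤ b := by
      intro i
      show A i ⬝ᵥ (u • x₁ + v • x₂) ≤ b i
      rw [dotProduct_add, dotProduct_smul, dotProduct_smul, smul_eq_mul, smul_eq_mul]
      have h1 := hx₁P i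
      have h2 := hx₂P i
      have h3 : u * b i + v * b i = b i := by rw [← add_mul, huv, one_mul]
      nlinarith [mul_le_mul_of_nonneg_left h1 hu, mul_le_mul_of_nonneg_left h2 hv]
    refine ⟨hyP, fun y hy => ?_⟩
    have hcy : c ⬝ᵥ (u • x₁ + v • x₂) = ∑ i ∈ S, b i := by
      rw [hcdot]
      refine Finset.sum_congr rfl fun i hi => ?_
      rw [dotProduct_add, dotProduct_smul, dotProduct_smul, smul_eq_mul, smul_eq_mul,
        (hSact i hi).1, (hSact i hi).2, ← add_mul, huv, one_mul]
    rw [hcy]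
    exact hmax y hy

lemma backward_dir {m n : ℕ} (A : Matrix (Fin m) (Fin n) ℝ) (b : Fin m → ℝ)
    (x₁ x₂ : Fin n → ℝ) (hne : x₁ ≠ x₂)
    (h₁ : IsVertex A b x₁) (h₂ : IsVertex A b x₂) (c : Fin n → ℝ)
    (hc : {x : Fin n → ℝ | A.mulVec x ≤ b ∧
        ∀ y : Fin n → ℝ, A.mulVec y ≤ b → c ⬝ᵥ y ≤ c ⬝ᵥ x} = segment ℝ x₁ x₂) :
    AdjacentVertices A b x₁ x₂ := by
  classical
  have hn : 0 < n := by
    rcases Nat.eq_zero_or_pos n with h | h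
    · exfalso; apply hne; subst h; exact Subsingleton.elim x₁ x₂
    · exact h
  set d : Fin n → ℝ := x₂ - x₁ with hd_def
  have hd : d ≠ 0 := sub_ne_zero.mpr (Ne.symm hne)
  clear_value d
  have hm : Nonempty (Fin m) := by
    by_contra hmem
    haveI : IsEmpty (Fin m) := not_nonempty_iff.mp hmem
    have hemp : {r : Fin n → ℝ | ∃ i, A i ⬝ᵥ x₁ = b i ∧ r = A i} = ∅ := by
      ext r; simp
    have h2 := h₁.2
    unfold activeRank at h2
    rw [hemp, Submodule.span_empty, finrank_bot] at h2
    omega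
  set x₀ : Fin n → ℝ := (1/2 : ℝ) • x₁ + (1/2 : ℝ) • x₂ with hx₀_def
  have hx₀seg : x₀ ∈ segment ℝ x₁ x₂ :=
    ⟨1/2, 1/2, by norm_num, by norm_num, by norm_num, rfl⟩
  clear_value x₀
  have hx₀mem : x₀ ∈ {x : Fin n → ℝ | A.mulVec x ≤ b ∧
      ∀ y : Fin n → ℝ, A.mulVec y ≤ b → c ⬝ᵥ y ≤ c ⬝ᵥ x} := by
    rw [hc]; exact hx₀seg
  obtain ⟨hx₀P, hopt⟩ := hx₀mem
  have hx₀P' : ∀ i, A i ⬝ᵥ x₀ ≤ b i := fun i => hx₀P i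
  have hact12 : ∀ i, A i ⬝ᵥ x₀ = b i → A i ⬝ᵥ x₁ = b i ∧ A i ⬝ᵥ x₂ = b i := by
    intro i hi
    have ha1 : A i ⬝ᵥ x₁ ≤ b i := h₁.1 i
    have ha2 : A i ⬝ᵥ x₂ ≤ b i := h₂.1 i
    have hmid : A i ⬝ᵥ x₀ = (1/2) * (A i ⬝ᵥ x₁) + (1/2) * (A i ⬝ᵥ x₂) := by
      rw [hx₀_def, dotProduct_add, dotProduct_smul, dotProduct_smul, smul_eq_mul, smul_eq_mul]
    constructor <;> linarith
  set T : Finset (Fin m) := Finset.univ.filter (fun i => A i ⬝ᵥ x₀ = b i) with hT_def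
  have hTmem : ∀ i, i ∈ T ↔ A i ⬝ᵥ x₀ = b i := by
    intro i; rw [hT_def, Finset.mem_filter]; simp
  set B : Matrix T (Fin n) ℝ := Matrix.of (fun i : T => A i.1) with hB_def
  set V := Submodule.span ℝ (Set.range B) with hV
  have hVle : finrank ℝ V ≤ n - 1 := by
    have hle : V ≤ LinearMap.ker (dotL d) := by
      rw [hV, Submodule.span_le]
      rintro _ ⟨i, rfl⟩
      have hi := hact12 i.1 ((hTmem i.1).mp i.2)
      simp only [SetLike.mem_coe, LinearMap.mem_ker, dotL_apply]
      show A i.1 ⬝ᵥ d = 0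
      rw [hd_def, dotProduct_sub, hi.1, hi.2, sub_self]
    calc finrank ℝ V ≤ finrank ℝ (LinearMap.ker (dotL d)) := Submodule.finrank_mono hle
      _ = n - 1 := finrank_ker_dotL hd
  have hVge : n - 1 ≤ finrank ℝ V := by
    by_contra hcon
    push_neg at hcon
    have hrn := LinearMap.finrank_range_add_finrank_ker B.mulVecLin
    have hrange : finrank ℝ (LinearMap.range B.mulVecLin) = finrank ℝ V := by
      have := B.rank_eq_finrank_span_row
      show _ = finrank ℝ (span ℝ (Set.range B.row)); rw [← this]; rfl
    rw [hrange, Module.finrank_fin_fun] at hrn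
    set K := LinearMap.ker B.mulVecLin with hK
    have hK2 : 2 ≤ finrank ℝ K := by omega
    have hnotle : ¬(K ≤ Submodule.span ℝ {d}) := by
      intro hle
      have := Submodule.finrank_mono hle
      rw [finrank_span_singleton hd] at this
      omega
    obtain ⟨v, hvK, hvspan⟩ := SetLike.not_le_iff_exists.mp hnotle
    clear hnotle
    have hvT : ∀ i ∈ T, A i ⬝ᵥ v = 0 := by
      intro i hi
      have h0 : B.mulVecLin v = 0 := LinearMap.mem_ker.mp hvK
      have := congrFun h0 ⟨i, hi⟩
      simpa [Matrix.mulVecLin_apply, Matrix.mulVec, hB_def] using this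
    have hδ : ∀ i : Fin m, ∃ δ : ℝ, 0 < δ ∧
        ∀ t : ℝ, |t| ≤ δ → A i ⬝ᵥ x₀ + t * (A i ⬝ᵥ v) ≤ b i := by
      intro i
      by_cases hi : i ∈ T
      · refine ⟨1, one_pos, fun t _ => ?_⟩
        rw [hvT i hi, mul_zero, add_zero]
        exact le_of_eq ((hTmem i).mp hi)
      · have hlt : A i ⬝ᵥ x₀ < b i := lt_of_le_of_ne (hx₀P' i) (by simpa [hTmem] using hi)
        have hslack : 0 < b i - A i ⬝ᵥ x₀ := by linarith
        set w := A i ⬝ᵥ v with hw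
        have hwpos : (0:ℝ) < |w| + 1 := by positivity
        have hδpos : 0 < (b i - A i ⬝ᵥ x₀) / (|w| + 1) := div_pos hslack hwpos
        refine ⟨(b i - A i ⬝ᵥ x₀) / (|w| + 1), hδpos, fun t ht => ?_⟩
        have habs : 0 ≤ |w| := abs_nonneg w
        have h1 : t * w ≤ |t| * |w| := by
          calc t * w ≤ |t * w| := le_abs_self _
            _ = |t| * |w| := abs_mul t w
        have h2 : |t| * |w| ≤ ((b i - A i ⬝ᵥ x₀) / (|w| + 1)) * |w| :=
          mul_le_mul_of_nonneg_right ht habs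
        have h3 : ((b i - A i ⬝ᵥ x₀) / (|w| + 1)) * |w| ≤
            ((b i - A i ⬝ᵥ x₀) / (|w| + 1)) * (|w| + 1) :=
          mul_le_mul_of_nonneg_left (by linarith) (le_of_lt hδpos)
        have h4 : ((b i - A i ⬝ᵥ x₀) / (|w| + 1)) * (|w| + 1) = b i - A i ⬝ᵥ x₀ :=
          div_mul_cancel₀ _ (ne_of_gt hwpos)
        linarith
    choose δ hδpos hδle using hδ
    set ε := Finset.univ.inf' (Finset.univ_nonempty) δ with hε_def
    have hε : 0 < ε := (Finset.lt_inf'_iff _).mpr fun i _ => hδpos i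
    have hPmem : ∀ t : ℝ, |t| ≤ ε → A.mulVec (x₀ + t • v) ≤ b := by
      intro t ht i
      show A i ⬝ᵥ (x₀ + t • v) ≤ b i
      rw [dotProduct_add, dotProduct_smul, smul_eq_mul]
      exact hδle i t (le_trans ht (Finset.inf'_le δ (Finset.mem_univ i)))
    have habs_ε : |ε| ≤ ε := le_of_eq (abs_of_pos hε)
    have habs_negε : |(-ε)| ≤ ε := le_of_eq (by rw [abs_neg]; exact abs_of_pos hε)
    have hcv : c ⬝ᵥ v = 0 := by
      have hplus := hopt (x₀ + ε • v) (hPmem ε habs_ε)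
      have hminus := hopt (x₀ + (-ε) • v) (hPmem (-ε) habs_negε)
      rw [dotProduct_add, dotProduct_smul, smul_eq_mul] at hplus hminus
      nlinarith
    have hmem2 : x₀ + ε • v ∈ {x : Fin n → ℝ | A.mulVec x ≤ b ∧
        ∀ y : Fin n → ℝ, A.mulVec y ≤ b → c ⬝ᵥ y ≤ c ⬝ᵥ x} := by
      refine ⟨hPmem ε habs_ε, fun y hy => ?_⟩
      calc c ⬝ᵥ y ≤ c ⬝ᵥ x₀ := hopt y hy
        _ = c ⬝ᵥ (x₀ + ε • v) := by
            rw [dotProduct_add, dotProduct_smul, smul_eq_mul, hcv, mul_zero, add_zero]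
    rw [hc] at hmem2
    obtain ⟨p, q, hp, hq, hpq, heq⟩ := hmem2
    have h2 : ε • v = (p • x₁ + q • x₂) - x₀ := by rw [heq]; abel
    have hp' : p = 1 - q := by linarith
    have h4 : ε • v = (q - 1/2) • d := by
      rw [h2, hp', hx₀_def, hd_def]; module
    have h5 : v = (ε⁻¹ * (q - 1/2)) • d := by
      have := congrArg (fun z => ε⁻¹ • z) h4
      simpa [smul_smul, inv_mul_cancel₀ (ne_of_gt hε)] using this
    exact hvspan (Submodule.mem_span_singleton.mpr ⟨_, h5.symm⟩)
  have hVrank : finrank ℝ V = n - 1 := le_antisymm hVle hVge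
  -- extract a linearly independent subfamily of rows
  obtain ⟨s, hs_sub, hs_span, hs_li⟩ := exists_linearIndependent ℝ (Set.range B)
  haveI : Fintype s := (hs_li.setFinite).fintype
  have hs_card : s.toFinset.card = n - 1 := by
    rw [← finrank_span_set_eq_card hs_li, hs_span, ← hV, hVrank]
  have hchoice : ∀ w : s, ∃ i : Fin m, i ∈ T ∧ A i = (w : Fin n → ℝ) := by
    intro w
    obtain ⟨i, hi⟩ := hs_sub w.2
    exact ⟨i.1, i.2, hi⟩
  choose g hgT hgA using hchoice
  have hg_inj : Function.Injective g := by
    intro w w' hww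
    apply Subtype.ext
    rw [← hgA w, ← hgA w', hww]
  refine ⟨Finset.image g Finset.univ, ?_, ?_, ?_⟩
  · rw [Finset.card_image_of_injective _ hg_inj, Finset.card_univ, ← Set.toFinset_card, hs_card]
  · have hψ : ∀ i : (Finset.image g Finset.univ : Finset (Fin m)),
        ∃ w : s, g w = i.1 := by
      intro i
      obtain ⟨w, _, hw⟩ := Finset.mem_image.mp i.2
      exact ⟨w, hw⟩
    choose ψ hψ' using hψ
    have hψinj : Function.Injective ψ := by
      intro i j hij
      apply Subtype.ext
      rw [← hψ' i, ← hψ' j, hij]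
    have hfe : (fun i : (Finset.image g Finset.univ : Finset (Fin m)) => A i.1) =
        (Subtype.val ∘ ψ) := by
      funext i
      rw [Function.comp_apply, ← hψ' i, hgA (ψ i)]
    rw [hfe]
    exact hs_li.comp ψ hψinj
  · intro i hi
    obtain ⟨w, _, rfl⟩ := Finset.mem_image.mp hi
    exact hact12 _ ((hTmem _).mp (hgT w))

/-- Two distinct vertices `x₁ ≠ x₂` of `P = {x | Ax ≤ b}` are adjacent iff there is a
`c` such that the set of maximizers of `cᵀx` over `P` is exactly the segment `[x₁, x₂]`. -/
theorem adjacent_iff_segment_of_maximizers {m n : ℕ}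
    (A : Matrix (Fin m) (Fin n) ℝ) (b : Fin m → ℝ)
    (x₁ x₂ : Fin n → ℝ) (hne : x₁ ≠ x₂)
    (h₁ : IsVertex A b x₁) (h₂ : IsVertex A b x₂) :
    AdjacentVertices A b x₁ x₂ ↔
      ∃ c : Fin n → ℝ,
        {x : Fin n → ℝ | A.mulVec x ≤ b ∧
            ∀ y : Fin n → ℝ, A.mulVec y ≤ b → c ⬝ᵥ y ≤ c ⬝ᵥ x} =
          segment ℝ x₁ x₂ := by
  constructor
  · exact forward_dir A b x₁ x₂ hne h₁ h₂
  · rintro ⟨c, hc⟩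
    exact backward_dir A b x₁ x₂ hne h₁ h₂ c hc
end

section
/- Suppose the linear program max{c^T x : x ∈ ℝ^n, A x ≤ b} is non-degenerate and B is a feasible but not optimal basis. Then x* = A_B^{-1} b_B is not an optimal solution: there exists a feasible y ∈ P with c^T y > c^T x*. -/
open Matrix

/-- If the LP `max {cᵀx : Ax ≤ b}` is non-degenerate (no point has more than `n`
active constraints) and `B` is a feasible but not optimal basis, then
`x* = A_B⁻¹ b_B` is not an optimal solution: some feasible `y` has a strictly
larger objective value. -/
theorem feasible_not_optimal_basis_not_optimal_solution {m n : ℕ}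
    (A : Matrix (Fin m) (Fin n) ℝ) (b : Fin m → ℝ) (c : Fin n → ℝ)
    (hnondeg : ∀ x : Fin n → ℝ, ({i : Fin m | A i ⬝ᵥ x = b i}).ncard ≤ n)
    (β : Fin n → Fin m) (hβ : Function.Injective β)
    (hinv : IsUnit (A.submatrix β id).det)
    (xstar : Fin n → ℝ)
    (hxstar : xstar = (A.submatrix β id)⁻¹.mulVec (b ∘ β))
    (hfeasB : A.mulVec xstar ≤ b)
    (hnotopt : ∃ lam : Fin m → ℝ,
      lam ᵥ* A = c ∧ (∀ i : Fin m, i ∉ Set.range β → lam i = 0) ∧ ∃ i : Fin m, lam i < 0) :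
    ∃ y : Fin n → ℝ, A.mulVec y ≤ b ∧ c ⬝ᵥ xstar < c ⬝ᵥ y := by
  obtain ⟨lam, hlamA, hlam0, i, hlamneg⟩ := hnotopt
  set M := A.submatrix β id with hM
  -- x* satisfies the basis equations
  have hMx : M.mulVec xstar = b ∘ β := by
    rw [hxstar, Matrix.mulVec_mulVec, Matrix.mul_nonsing_inv _ hinv, Matrix.one_mulVec]
  have hrow : ∀ j, A (β j) ⬝ᵥ xstar = b (β j) := by
    intro j
    have := congrFun hMx j
    simpa [Matrix.mulVec, hM, Matrix.submatrix_apply] using this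
  -- active set is exactly the range of β
  have hactive : {r : Fin m | A r ⬝ᵥ xstar = b r} = Set.range β := by
    have hsub : Set.range β ⊆ {r : Fin m | A r ⬝ᵥ xstar = b r} := by
      rintro _ ⟨j, rfl⟩; exact hrow j
    refine (Set.eq_of_subset_of_ncard_le hsub ?_ (Set.toFinite _)).symm
    calc {r : Fin m | A r ⬝ᵥ xstar = b r}.ncard ≤ n := hnondeg xstar
      _ = (Set.range β).ncard := by
          rw [← Set.image_univ, Set.ncard_image_of_injective _ hβ]
          simp [Set.ncard_univ]
  -- the negative multiplier is on a basis row
  obtain ⟨k, hk⟩ : i ∈ Set.range β := by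
    by_contra h; exact absurd (hlam0 i h) (by linarith)
  -- direction
  set d : Fin n → ℝ := -(M⁻¹.mulVec (Pi.single k 1)) with hd
  have hMd : M.mulVec d = -(Pi.single k 1) := by
    rw [hd, Matrix.mulVec_neg, Matrix.mulVec_mulVec, Matrix.mul_nonsing_inv _ hinv,
      Matrix.one_mulVec]
  have hAd : ∀ j, A (β j) ⬝ᵥ d = -(Pi.single k 1 : Fin n → ℝ) j := by
    intro j
    have := congrFun hMd j
    simpa [Matrix.mulVec, hM, Matrix.submatrix_apply] using this
  -- objective increase
  have hcd : c ⬝ᵥ d = -lam i := by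
    have h1 : c ⬝ᵥ d = lam ⬝ᵥ A.mulVec d := by
      rw [Matrix.dotProduct_mulVec, hlamA]
    have h2 : ∑ r ∈ Finset.image β Finset.univ, lam r * (A.mulVec d) r
        = ∑ r, lam r * (A.mulVec d) r := by
      refine Finset.sum_subset (Finset.subset_univ _) (fun r _ hr => ?_)
      have : r ∉ Set.range β := by
        simpa [Finset.mem_image] using hr
      rw [hlam0 r this, zero_mul]
    have h3 : ∑ r ∈ Finset.image β Finset.univ, lam r * (A.mulVec d) r
        = ∑ j, lam (β j) * (A.mulVec d) (β j) :=
      Finset.sum_image (fun a _ b _ h => hβ h)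
    have h4 : ∀ j, (A.mulVec d) (β j) = -(Pi.single k 1 : Fin n → ℝ) j := fun j => hAd j
    calc c ⬝ᵥ d = ∑ r, lam r * (A.mulVec d) r := h1
      _ = ∑ j, lam (β j) * (A.mulVec d) (β j) := by rw [← h2, h3]
      _ = ∑ j, lam (β j) * (-(Pi.single k 1 : Fin n → ℝ) j) := by
          simp only [h4]
      _ = -lam i := by
          rw [← hk]
          simp [Pi.single_apply, mul_ite, Finset.sum_ite_eq']
  have hcdpos : 0 < c ⬝ᵥ d := by rw [hcd]; linarith
  -- step size
  have hmne : (Finset.univ : Finset (Fin m)).Nonempty := ⟨i, Finset.mem_univ i⟩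
  set f : Fin m → ℝ := fun r =>
    if A r ⬝ᵥ xstar = b r then 1 else (b r - A r ⬝ᵥ xstar) / (|A r ⬝ᵥ d| + 1) with hf
  have hfpos : ∀ r, 0 < f r := by
    intro r
    rw [hf]
    by_cases h : A r ⬝ᵥ xstar = b r
    · simp [h]
    · have hlt : A r ⬝ᵥ xstar < b r := lt_of_le_of_ne (hfeasB r) h
      have : (0:ℝ) < |A r ⬝ᵥ d| + 1 := by positivity
      simp only [h, if_false]
      exact div_pos (by linarith) this
  set t : ℝ := Finset.univ.inf' hmne f with ht
  have htpos : 0 < t := by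
    rw [ht]
    exact (Finset.lt_inf'_iff hmne).2 fun r _ => hfpos r
  refine ⟨xstar + t • d, ?_, ?_⟩
  · intro r
    have hAy : (A.mulVec (xstar + t • d)) r = A r ⬝ᵥ xstar + t * (A r ⬝ᵥ d) := by
      simp [Matrix.mulVec_add, Matrix.mulVec_smul, Matrix.mulVec, smul_eq_mul]
    rw [hAy]
    by_cases h : A r ⬝ᵥ xstar = b r
    · obtain ⟨j, rfl⟩ : r ∈ Set.range β := hactive ▸ h
      rw [hAd j, hrow j]
      have : (0:ℝ) ≤ (Pi.single k 1 : Fin n → ℝ) j := by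
        rw [Pi.single_apply]; split <;> norm_num
      nlinarith
    · have hlt : A r ⬝ᵥ xstar < b r := lt_of_le_of_ne (hfeasB r) h
      have htf : t ≤ f r := Finset.inf'_le _ (Finset.mem_univ r)
      have habs : (0:ℝ) < |A r ⬝ᵥ d| + 1 := by positivity
      have h1 : t * (A r ⬝ᵥ d) ≤ t * |A r ⬝ᵥ d| :=
        mul_le_mul_of_nonneg_left (le_abs_self _) htpos.le
      have h2 : t * (|A r ⬝ᵥ d| + 1) ≤ f r * (|A r ⬝ᵥ d| + 1) :=
        mul_le_mul_of_nonneg_right htf habs.le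
      have h3 : f r * (|A r ⬝ᵥ d| + 1) = b r - A r ⬝ᵥ xstar := by
        rw [hf]; simp only [h, if_false]
        field_simp
      nlinarith
  · have : c ⬝ᵥ (xstar + t • d) = c ⬝ᵥ xstar + t * (c ⬝ᵥ d) := by
      simp [dotProduct_add, dotProduct_smul, smul_eq_mul]
    rw [this]
    nlinarith
end

section
/- (Strong Duality) Consider the linear program max{c^T x : x ∈ ℝ^n, A x ≤ b, x ≥ 0} and its dual min{b^T y : y ∈ ℝ^m, A^T y ≥ c, y ≥ 0}. If the primal is feasible and bounded (there exist feasible points and an M ∈ ℝ with c^T x ≤ M for all primal-feasible x), then there exist a primal feasible x* and a dual feasible y* with c^T x* = b^T y*. -/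
open Matrix

open Finset

section FarkasAux

section step
variable {n : ℕ} {R : Type} [Fintype R] [DecidableEq R]
variable (A : Matrix R (Fin (n+1)) ℝ) (b : R → ℝ)

/-- combination coefficients -/
noncomputable def FMc : R × R → R → ℝ := fun p l =>
  if 0 < A p.1 0 ∧ A p.2 0 < 0 then
    (if l = p.1 then -A p.2 0 else 0) + (if l = p.2 then A p.1 0 else 0)
  else if p.1 = p.2 ∧ A p.1 0 = 0 then (if l = p.1 then 1 else 0) else 0

lemma FMc_nonneg (p : R × R) (l : R) : 0 ≤ FMc A p l := by
  unfold FMc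
  split
  · rename_i hc
    have h1 : (0:ℝ) ≤ (if l = p.1 then -A p.2 0 else 0) := by
      split
      · linarith [hc.2]
      · exact le_refl 0
    have h2 : (0:ℝ) ≤ (if l = p.2 then A p.1 0 else 0) := by
      split
      · linarith [hc.1]
      · exact le_refl 0
    linarith
  · split
    · split <;> norm_num
    · exact le_refl 0

/-- generic evaluation of a combination against any vector -/
lemma FMc_sum (p : R × R) (t : R → ℝ) :
    ∑ l, FMc A p l * t l =
      if 0 < A p.1 0 ∧ A p.2 0 < 0 then (-A p.2 0) * t p.1 + A p.1 0 * t p.2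
      else if p.1 = p.2 ∧ A p.1 0 = 0 then t p.1 else 0 := by
  unfold FMc
  split
  · simp [add_mul, Finset.sum_add_distrib, ite_mul, Finset.sum_ite_eq']
  · split
    · simp [ite_mul, Finset.sum_ite_eq']
    · simp

lemma FMc_col0 (p : R × R) : ∑ l, FMc A p l * A l 0 = 0 := by
  rw [FMc_sum]
  split
  · ring
  · split
    · rename_i h; exact h.2
    · rfl

end step

section step2
set_option linter.unusedSectionVars false
variable {n : ℕ} {R : Type} [Fintype R] [DecidableEq R]
variable (A : Matrix R (Fin (n+1)) ℝ) (b : R → ℝ)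

noncomputable def FMB : Matrix (R × R) (Fin n) ℝ := fun p k => ∑ l, FMc A p l * A l k.succ
noncomputable def FMd : (R × R) → ℝ := fun p => ∑ l, FMc A p l * b l

/-- if the eliminated system is solvable, so is the original -/
lemma FM_lift (x' : Fin n → ℝ) (hx' : (FMB A).mulVec x' ≤ FMd A b) :
    ∃ x : Fin (n+1) → ℝ, A.mulVec x ≤ b := by
  classical
  set tail : R → ℝ := fun i => ∑ k, A i k.succ * x' k with htail
  have hrow : ∀ p, ∑ l, FMc A p l * tail l ≤ ∑ l, FMc A p l * b l := by
    intro p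
    have h1 := hx' p
    have h2 : (FMB A).mulVec x' p = ∑ l, FMc A p l * tail l := by
      simp only [Matrix.mulVec, dotProduct, FMB, Finset.sum_mul]
      rw [Finset.sum_comm]
      simp [htail, Finset.mul_sum, mul_assoc]
    rw [h2] at h1
    exact h1
  set g : R → ℝ := fun l => b l - tail l with hg
  -- pairwise bound: for i in P, j in N we get u j ≤ u i where u l = g l / A l 0
  set u : R → ℝ := fun l => g l / A l 0 with hu
  have hPN : ∀ i j : R, 0 < A i 0 → A j 0 < 0 → u j ≤ u i := by
    intro i j hi hj
    have hr := hrow (i, j)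
    rw [FMc_sum, FMc_sum] at hr
    rw [if_pos ⟨hi, hj⟩, if_pos ⟨hi, hj⟩] at hr
    have hcomb : 0 ≤ (-A j 0) * g i + A i 0 * g j := by
      simp only [hg]; ring_nf; ring_nf at hr; linarith
    have hpos : (0:ℝ) < A i 0 * (-A j 0) := mul_pos hi (by linarith)
    have e1 : g j / A j 0 * (A i 0 * -A j 0) = -(A i 0 * g j) := by
      have h1 : g j / A j 0 * (A i 0 * -A j 0) = -(A i 0) * (g j / A j 0 * A j 0) := by ring
      rw [h1, div_mul_cancel₀ _ (ne_of_lt hj)]; ring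
    have e2 : g i / A i 0 * (A i 0 * -A j 0) = (-A j 0) * g i := by
      have h1 : g i / A i 0 * (A i 0 * -A j 0) = (-A j 0) * (g i / A i 0 * A i 0) := by ring
      rw [h1, div_mul_cancel₀ _ (ne_of_gt hi)]
    refine le_of_mul_le_mul_right ?_ hpos
    rw [hu]; dsimp only; rw [e1, e2]; linarith
  -- choose x0
  set P : Finset R := Finset.univ.filter (fun i => 0 < A i 0) with hP
  set N : Finset R := Finset.univ.filter (fun j => A j 0 < 0) with hN
  set x0 : ℝ := if hp : P.Nonempty then P.inf' hp u
    else if hn : N.Nonempty then N.sup' hn u else 0 with hx0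
  have hub : ∀ i ∈ P, x0 ≤ u i := by
    intro i hi
    have hp : P.Nonempty := ⟨i, hi⟩
    rw [hx0, dif_pos hp]
    exact Finset.inf'_le u hi
  have hlb : ∀ j ∈ N, u j ≤ x0 := by
    intro j hj
    by_cases hp : P.Nonempty
    · rw [hx0, dif_pos hp]
      apply Finset.le_inf'
      intro i hi
      exact hPN i j (Finset.mem_filter.mp hi).2 (Finset.mem_filter.mp hj).2
    · have hn : N.Nonempty := ⟨j, hj⟩
      rw [hx0, dif_neg hp, dif_pos hn]
      exact Finset.le_sup' u hj
  refine ⟨Fin.cons x0 x', ?_⟩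
  intro i
  have hmv : A.mulVec (Fin.cons x0 x') i = A i 0 * x0 + tail i := by
    simp [Matrix.mulVec, dotProduct, Fin.sum_univ_succ, htail]
  rw [hmv]
  rcases lt_trichotomy (A i 0) 0 with hlt | heq | hgt
  · have hjN : i ∈ N := Finset.mem_filter.mpr ⟨Finset.mem_univ i, hlt⟩
    have := hlb i hjN
    have h2 : A i 0 * x0 ≤ A i 0 * u i := mul_le_mul_of_nonpos_left this (le_of_lt hlt)
    have h3 : A i 0 * u i = g i := by
      rw [hu]; dsimp only; rw [mul_div_cancel₀ _ (ne_of_lt hlt)]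
    rw [h3] at h2
    simp only [hg] at h2; linarith
  · have hr := hrow (i, i)
    rw [FMc_sum, FMc_sum] at hr
    have hcond : ¬ (0 < A i 0 ∧ A i 0 < 0) := by rintro ⟨h1, h2⟩; linarith
    rw [if_neg hcond, if_pos ⟨rfl, heq⟩, if_neg hcond, if_pos ⟨rfl, heq⟩] at hr
    rw [heq]; linarith
  · have hiP : i ∈ P := Finset.mem_filter.mpr ⟨Finset.mem_univ i, hgt⟩
    have := hub i hiP
    have h2 : A i 0 * x0 ≤ A i 0 * u i := mul_le_mul_of_nonneg_left this (le_of_lt hgt)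
    have h3 : A i 0 * u i = g i := by
      rw [hu]; dsimp only; rw [mul_div_cancel₀ _ (ne_of_gt hgt)]
    rw [h3] at h2
    simp only [hg] at h2; linarith

end step2

theorem farkasEq : ∀ (n : ℕ) {R : Type} [Fintype R] [DecidableEq R]
    (A : Matrix R (Fin n) ℝ) (b : R → ℝ),
    (¬ ∃ x : Fin n → ℝ, A.mulVec x ≤ b) →
    ∃ y : R → ℝ, 0 ≤ y ∧ (∀ k, ∑ i, y i * A i k = 0) ∧ ∑ i, b i * y i < 0 := by
  intro n
  induction n with
  | zero =>
      intro R _ _ A b h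
      have h0 : ¬ (0 : R → ℝ) ≤ b := by
        intro hle
        exact h ⟨0, by
          intro i
          simpa [Matrix.mulVec, dotProduct] using hle i⟩
      obtain ⟨i, hi⟩ : ∃ i, b i < 0 := by
        by_contra hc
        push_neg at hc
        exact h0 (fun i => hc i)
      refine ⟨fun l => if l = i then 1 else 0, ?_, ?_, ?_⟩
      · intro l; dsimp; split <;> norm_num
      · exact fun k => k.elim0
      · simpa using hi
  | succ n ih =>
      intro R _ _ A b h
      have hnew : ¬ ∃ x' : Fin n → ℝ, (FMB A).mulVec x' ≤ FMd A b := by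
        rintro ⟨x', hx'⟩
        exact h (FM_lift A b x' hx')
      obtain ⟨y', hy'0, hy'col, hy'b⟩ := ih (FMB A) (FMd A b) hnew
      refine ⟨fun l => ∑ p, y' p * FMc A p l, ?_, ?_, ?_⟩
      · intro l
        exact Finset.sum_nonneg fun p _ => mul_nonneg (hy'0 p) (FMc_nonneg A p l)
      · intro k
        have hswap : ∀ t : R → ℝ,
            ∑ l, (∑ p, y' p * FMc A p l) * t l = ∑ p, y' p * ∑ l, FMc A p l * t l := by
          intro t
          simp only [Finset.sum_mul, Finset.mul_sum, mul_assoc]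
          exact Finset.sum_comm
        refine Fin.cases ?_ ?_ k
        · rw [hswap]
          simp [FMc_col0]
        · intro k'
          rw [hswap (fun l => A l k'.succ)]
          have := hy'col k'
          simp only [FMB] at this
          exact this
      · have hswap :
            ∑ l, b l * (∑ p, y' p * FMc A p l) = ∑ p, FMd A b p * y' p := by
          simp only [Finset.mul_sum, Finset.sum_mul, FMd]
          rw [Finset.sum_comm]
          apply Finset.sum_congr rfl
          intro p _
          exact Finset.sum_congr rfl fun l _ => by ring
        rw [hswap]
        exact hy'b

theorem farkasEq' {R C : Type} [Fintype R] [DecidableEq R] [Fintype C] [DecidableEq C]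
    (A : Matrix R C ℝ) (b : R → ℝ)
    (h : ¬ ∃ x : C → ℝ, A.mulVec x ≤ b) :
    ∃ y : R → ℝ, 0 ≤ y ∧ (∀ c, ∑ i, y i * A i c = 0) ∧ ∑ i, b i * y i < 0 := by
  classical
  let e := Fintype.equivFin C
  let A' : Matrix R (Fin (Fintype.card C)) ℝ := fun i k => A i (e.symm k)
  have h' : ¬ ∃ x' : Fin (Fintype.card C) → ℝ, A'.mulVec x' ≤ b := by
    rintro ⟨x', hx'⟩
    refine h ⟨fun c => x' (e c), fun i => ?_⟩
    have : A.mulVec (fun c => x' (e c)) i = A'.mulVec x' i := by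
      simp only [Matrix.mulVec, dotProduct, A']
      exact (Fintype.sum_equiv e.symm _ _ (fun k => by simp)).symm
    rw [this]
    exact hx' i
  obtain ⟨y, hy0, hycol, hyb⟩ := farkasEq _ A' b h'
  refine ⟨y, hy0, fun c => ?_, hyb⟩
  have := hycol (e c)
  simpa [A'] using this

theorem farkasIneq {R C : Type} [Fintype R] [DecidableEq R] [Fintype C] [DecidableEq C]
    (A : Matrix R C ℝ) (b : R → ℝ)
    (h : ¬ ∃ x : C → ℝ, A.mulVec x ≤ b ∧ 0 ≤ x) :
    ∃ y : R → ℝ, 0 ≤ y ∧ (∀ c, 0 ≤ ∑ i, y i * A i c) ∧ ∑ i, b i * y i < 0 := by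
  classical
  let A' : Matrix (R ⊕ C) C ℝ := Sum.elim (fun i c => A i c) (fun c c' => if c' = c then (-1:ℝ) else 0)
  let b' : R ⊕ C → ℝ := Sum.elim b 0
  have h' : ¬ ∃ x : C → ℝ, A'.mulVec x ≤ b' := by
    rintro ⟨x, hx⟩
    refine h ⟨x, fun i => ?_, fun c => ?_⟩
    · simpa [A', b', Matrix.mulVec, dotProduct] using hx (Sum.inl i)
    · have := hx (Sum.inr c)
      simp only [A', b', Matrix.mulVec, dotProduct, Sum.elim_inr] at this
      simp only [ite_mul, neg_mul, one_mul, zero_mul, Finset.sum_ite_eq,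
        Finset.mem_univ, if_true] at this
      simpa using this
  obtain ⟨y', hy0, hycol, hyb⟩ := farkasEq' A' b' h'
  refine ⟨fun i => y' (Sum.inl i), fun i => hy0 (Sum.inl i), fun c => ?_, ?_⟩
  · have := hycol c
    rw [Fintype.sum_sum_type] at this
    simp only [A', Sum.elim_inl, Sum.elim_inr, ite_mul, neg_mul, one_mul, zero_mul,
      mul_ite, mul_neg, mul_one, mul_zero, Finset.sum_ite_eq, Finset.mem_univ, if_true] at this
    have h2 : ∑ i, y' (Sum.inl i) * A i c = y' (Sum.inr c) := by linarith
    rw [h2]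
    exact hy0 (Sum.inr c)
  · have := hyb
    rw [Fintype.sum_sum_type] at this
    simpa [b'] using this

theorem weakDuality {m n : ℕ} (A : Matrix (Fin m) (Fin n) ℝ) (b : Fin m → ℝ) (c : Fin n → ℝ)
    {x : Fin n → ℝ} {y : Fin m → ℝ}
    (hx : A.mulVec x ≤ b) (hx0 : 0 ≤ x) (hy : c ≤ Aᵀ.mulVec y) (hy0 : 0 ≤ y) :
    c ⬝ᵥ x ≤ b ⬝ᵥ y := by
  have h1 : c ⬝ᵥ x ≤ ∑ k, (∑ j, A j k * y j) * x k := by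
    apply Finset.sum_le_sum
    intro k _
    apply mul_le_mul_of_nonneg_right _ (hx0 k)
    simpa [Matrix.mulVec, dotProduct, Matrix.transpose_apply] using hy k
  have h2 : ∑ k, (∑ j, A j k * y j) * x k = ∑ j, y j * A.mulVec x j := by
    simp only [Matrix.mulVec, dotProduct, Finset.sum_mul, Finset.mul_sum]
    rw [Finset.sum_comm]
    exact Finset.sum_congr rfl fun j _ => Finset.sum_congr rfl fun k _ => by ring
  have h3 : ∑ j, y j * A.mulVec x j ≤ ∑ j, y j * b j :=
    Finset.sum_le_sum fun j _ => mul_le_mul_of_nonneg_left (hx j) (hy0 j)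
  calc c ⬝ᵥ x ≤ ∑ k, (∑ j, A j k * y j) * x k := h1
    _ = ∑ j, y j * A.mulVec x j := h2
    _ ≤ ∑ j, y j * b j := h3
    _ = b ⬝ᵥ y := by simp [dotProduct, mul_comm]

end FarkasAux

/-- Strong duality: if the primal `max {cᵀx : Ax ≤ b, x ≥ 0}` is feasible and bounded,
then there are a primal feasible `x*` and a dual feasible `y*` (for
`min {bᵀy : Aᵀy ≥ c, y ≥ 0}`) with `cᵀx* = bᵀy*`. -/
theorem lp_strong_duality {m n : ℕ}
    (A : Matrix (Fin m) (Fin n) ℝ) (b : Fin m → ℝ) (c : Fin n → ℝ)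
    (hfeas : ∃ x : Fin n → ℝ, A.mulVec x ≤ b ∧ 0 ≤ x)
    (hbdd : ∃ M : ℝ, ∀ x : Fin n → ℝ, A.mulVec x ≤ b → 0 ≤ x → c ⬝ᵥ x ≤ M) :
    ∃ (xstar : Fin n → ℝ) (ystar : Fin m → ℝ),
      (A.mulVec xstar ≤ b ∧ 0 ≤ xstar) ∧
      (c ≤ Aᵀ.mulVec ystar ∧ 0 ≤ ystar) ∧
      c ⬝ᵥ xstar = b ⬝ᵥ ystar := by
  classical
  set M : Matrix ((Fin m) ⊕ ((Fin n) ⊕ Unit)) ((Fin n) ⊕ (Fin m)) ℝ :=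
    Sum.elim (fun i => Sum.elim (fun k => A i k) (fun _ => 0))
      (Sum.elim (fun k' => Sum.elim (fun _ => (0:ℝ)) (fun j => -(A j k')))
        (fun _ => Sum.elim (fun k => -(c k)) (fun j => b j))) with hM
  set d : (Fin m) ⊕ ((Fin n) ⊕ Unit) → ℝ :=
    Sum.elim b (Sum.elim (fun k => -(c k)) (fun _ => 0)) with hd
  by_cases hsolv : ∃ z : (Fin n) ⊕ (Fin m) → ℝ, M.mulVec z ≤ d ∧ 0 ≤ z
  · obtain ⟨z, hz, hz0⟩ := hsolv
    set x : Fin n → ℝ := fun k => z (Sum.inl k) with hx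
    set y : Fin m → ℝ := fun j => z (Sum.inr j) with hy
    have hx0 : 0 ≤ x := fun k => hz0 (Sum.inl k)
    have hy0 : 0 ≤ y := fun j => hz0 (Sum.inr j)
    have hprim : A.mulVec x ≤ b := by
      intro i
      have := hz (Sum.inl i)
      simp only [hM, hd, Matrix.mulVec, dotProduct, Fintype.sum_sum_type,
        Sum.elim_inl, Sum.elim_inr, zero_mul, Finset.sum_const_zero, add_zero] at this
      simpa [Matrix.mulVec, dotProduct] using this
    have hdual : c ≤ Aᵀ.mulVec y := by
      intro k'
      have := hz (Sum.inr (Sum.inl k'))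
      simp only [hM, hd, Matrix.mulVec, dotProduct, Fintype.sum_sum_type,
        Sum.elim_inl, Sum.elim_inr, zero_mul, Finset.sum_const_zero, zero_add,
        neg_mul] at this
      simp only [Matrix.mulVec, dotProduct, Matrix.transpose_apply]
      have h2 : -∑ j, A j k' * y j ≤ -c k' := by
        rw [← Finset.sum_neg_distrib]
        exact this
      linarith
    have hlast : b ⬝ᵥ y ≤ c ⬝ᵥ x := by
      have := hz (Sum.inr (Sum.inr ()))
      simp only [hM, hd, Matrix.mulVec, dotProduct, Fintype.sum_sum_type,
        Sum.elim_inl, Sum.elim_inr, neg_mul] at this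
      simp only [dotProduct]
      have h2 : -∑ k, c k * x k + ∑ j, b j * y j ≤ 0 := by
        rw [← Finset.sum_neg_distrib]
        exact this
      linarith
    exact ⟨x, y, ⟨hprim, hx0⟩, ⟨hdual, hy0⟩,
      le_antisymm (weakDuality A b c hprim hx0 hdual hy0) hlast⟩
  · exfalso
    obtain ⟨w, hw0, hwcol, hwobj⟩ := farkasIneq M d hsolv
    set u : Fin m → ℝ := fun i => w (Sum.inl i) with hu
    set v : Fin n → ℝ := fun k => w (Sum.inr (Sum.inl k)) with hv
    set α : ℝ := w (Sum.inr (Sum.inr ())) with hα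
    have hα0 : 0 ≤ α := hw0 _
    have hcol1 : ∀ k, α * c k ≤ ∑ i, u i * A i k := by
      intro k
      have := hwcol (Sum.inl k)
      simp only [hM, Fintype.sum_sum_type, Sum.elim_inl, Sum.elim_inr,
        mul_zero, Finset.sum_const_zero, mul_neg] at this
      simp only [Finset.univ_unique, Finset.sum_singleton] at this
      linarith
    have hcol2 : ∀ j, ∑ k, A j k * v k ≤ α * b j := by
      intro j
      have := hwcol (Sum.inr j)
      simp only [hM, Fintype.sum_sum_type, Sum.elim_inl, Sum.elim_inr,
        mul_zero, Finset.sum_const_zero, mul_neg, zero_add] at this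
      simp only [Finset.univ_unique, Finset.sum_singleton] at this
      have h2 : ∑ k, A j k * v k = ∑ k, v k * A j k :=
        Finset.sum_congr rfl fun k _ => by ring
      rw [h2]
      have h3 : ∑ k, -(v k * A j k) = -∑ k, v k * A j k := by
        rw [Finset.sum_neg_distrib]
      linarith [this]
    have hobj : ∑ i, b i * u i < ∑ k, c k * v k := by
      have := hwobj
      simp only [hd, Fintype.sum_sum_type, Sum.elim_inl, Sum.elim_inr,
        zero_mul, neg_mul] at this
      simp only [Finset.univ_unique, Finset.sum_singleton] at this
      have h3 : ∑ k, -(c k * v k) = -∑ k, c k * v k := by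
        rw [Finset.sum_neg_distrib]
      linarith [this]
    rcases eq_or_lt_of_le hα0 with hαeq | hαpos
    · -- α = 0 : derive contradiction from feasibility + boundedness
      obtain ⟨x0, hx0f, hx00⟩ := hfeas
      obtain ⟨Mb, hMb⟩ := hbdd
      have hu0 : ∀ i, 0 ≤ u i := fun i => hw0 (Sum.inl i)
      have hv0 : ∀ k, 0 ≤ v k := fun k => hw0 (Sum.inr (Sum.inl k))
      have hcol1' : ∀ k, 0 ≤ ∑ i, u i * A i k := by
        intro k; have := hcol1 k; rw [← hαeq] at this; simpa using this
      have hcol2' : ∀ j, ∑ k, A j k * v k ≤ 0 := by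
        intro j; have := hcol2 j; rw [← hαeq] at this; simpa using this
      have hbu : 0 ≤ ∑ i, b i * u i := by
        have h1 : 0 ≤ ∑ k, (∑ i, u i * A i k) * x0 k :=
          Finset.sum_nonneg fun k _ => mul_nonneg (hcol1' k) (hx00 k)
        have h2 : ∑ k, (∑ i, u i * A i k) * x0 k = ∑ i, u i * A.mulVec x0 i := by
          simp only [Matrix.mulVec, dotProduct, Finset.sum_mul, Finset.mul_sum]
          rw [Finset.sum_comm]
          exact Finset.sum_congr rfl fun i _ => Finset.sum_congr rfl fun k _ => by ring
        have h3 : ∑ i, u i * A.mulVec x0 i ≤ ∑ i, u i * b i :=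
          Finset.sum_le_sum fun i _ => mul_le_mul_of_nonneg_left (hx0f i) (hu0 i)
        have h4 : ∑ i, u i * b i = ∑ i, b i * u i :=
          Finset.sum_congr rfl fun i _ => by ring
        linarith
      have hcv : 0 < ∑ k, c k * v k := lt_of_le_of_lt hbu hobj
      -- unbounded ray
      set t : ℝ := (Mb - c ⬝ᵥ x0) / (∑ k, c k * v k) + 1 with ht
      have hMb0 := hMb x0 hx0f hx00
      have ht0 : 0 < t := by
        have h0 : 0 ≤ (Mb - c ⬝ᵥ x0) / (∑ k, c k * v k) :=
          div_nonneg (by linarith) (le_of_lt hcv)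
        rw [ht]
        linarith
      set x1 : Fin n → ℝ := fun k => x0 k + t * v k with hx1
      have hx10 : 0 ≤ x1 := fun k =>
        add_nonneg (hx00 k) (mul_nonneg (le_of_lt ht0) (hv0 k))
      have hx1f : A.mulVec x1 ≤ b := by
        intro j
        have : A.mulVec x1 j = A.mulVec x0 j + t * ∑ k, A j k * v k := by
          simp only [Matrix.mulVec, dotProduct, hx1, Finset.mul_sum]
          rw [← Finset.sum_add_distrib]
          exact Finset.sum_congr rfl fun k _ => by ring
        rw [this]
        have h2 : t * ∑ k, A j k * v k ≤ 0 :=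
          mul_nonpos_of_nonneg_of_nonpos (le_of_lt ht0) (hcol2' j)
        have := hx0f j
        linarith
      have hobj1 : c ⬝ᵥ x1 = c ⬝ᵥ x0 + t * ∑ k, c k * v k := by
        simp only [dotProduct, hx1, Finset.mul_sum]
        rw [← Finset.sum_add_distrib]
        exact Finset.sum_congr rfl fun k _ => by ring
      have hbig : Mb < c ⬝ᵥ x1 := by
        rw [hobj1, ht]
        have hne : (∑ k, c k * v k) ≠ 0 := ne_of_gt hcv
        rw [add_mul, div_mul_cancel₀ _ hne, one_mul]
        linarith
      exact absurd (hMb x1 hx1f hx10) (not_le.mpr hbig)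
    · -- α > 0 : contradiction with weak duality
      set xs : Fin n → ℝ := fun k => α⁻¹ * v k with hxs
      set ys : Fin m → ℝ := fun i => α⁻¹ * u i with hys
      have hαinv : 0 < α⁻¹ := inv_pos.mpr hαpos
      have hxs0 : 0 ≤ xs := fun k =>
        mul_nonneg (le_of_lt hαinv) (hw0 (Sum.inr (Sum.inl k)))
      have hys0 : 0 ≤ ys := fun i => mul_nonneg (le_of_lt hαinv) (hw0 (Sum.inl i))
      have hxsf : A.mulVec xs ≤ b := by
        intro j
        have h1 : A.mulVec xs j = α⁻¹ * ∑ k, A j k * v k := by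
          simp only [Matrix.mulVec, dotProduct, hxs, Finset.mul_sum]
          exact Finset.sum_congr rfl fun k _ => by ring
        rw [h1]
        have h2 := mul_le_mul_of_nonneg_left (hcol2 j) (le_of_lt hαinv)
        rw [← mul_assoc, inv_mul_cancel₀ (ne_of_gt hαpos), one_mul] at h2
        exact h2
      have hysf : c ≤ Aᵀ.mulVec ys := by
        intro k
        have h1 : Aᵀ.mulVec ys k = α⁻¹ * ∑ i, u i * A i k := by
          simp only [Matrix.mulVec, dotProduct, Matrix.transpose_apply, hys,
            Finset.mul_sum]
          exact Finset.sum_congr rfl fun i _ => by ring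
        rw [h1]
        have h2 := mul_le_mul_of_nonneg_left (hcol1 k) (le_of_lt hαinv)
        rw [← mul_assoc, inv_mul_cancel₀ (ne_of_gt hαpos), one_mul] at h2
        exact h2
      have hwk := weakDuality A b c hxsf hxs0 hysf hys0
      have h1 : c ⬝ᵥ xs = α⁻¹ * ∑ k, c k * v k := by
        simp only [dotProduct, hxs, Finset.mul_sum]
        exact Finset.sum_congr rfl fun k _ => by ring
      have h2 : b ⬝ᵥ ys = α⁻¹ * ∑ i, b i * u i := by
        simp only [dotProduct, hys, Finset.mul_sum]
        exact Finset.sum_congr rfl fun i _ => by ring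
      have h3 : b ⬝ᵥ ys < c ⬝ᵥ xs := by
        rw [h1, h2]
        exact mul_lt_mul_of_pos_left hobj hαinv
      linarith
end

section
/- If A ∈ ℤ^{m×n} is totally unimodular and b ∈ ℤ^m, then every vertex of the polyhedron P = {x ∈ ℝ^n : A x ≤ b} is integral, i.e., has all coordinates in ℤ. -/
open Matrix

/-- An integer matrix is totally unimodular if every square submatrix has
determinant `0`, `1` or `-1`. -/
def IsTU {m n : ℕ} (A : Matrix (Fin m) (Fin n) ℤ) : Prop :=
  ∀ (k : ℕ) (f : Fin k → Fin m) (g : Fin k → Fin n),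
    (A.submatrix f g).det = 0 ∨ (A.submatrix f g).det = 1 ∨ (A.submatrix f g).det = -1

/-- If `A ∈ ℤ^{m×n}` is totally unimodular and `b ∈ ℤ^m`, then every vertex of
`P = {x ∈ ℝⁿ : Ax ≤ b}` is integral. -/
theorem tu_polyhedron_vertex_integral {m n : ℕ}
    (A : Matrix (Fin m) (Fin n) ℤ) (b : Fin m → ℤ) (hTU : IsTU A)
    (x : Fin n → ℝ)
    (hfeas : (A.map (Int.cast : ℤ → ℝ)).mulVec x ≤ fun i => (b i : ℝ))
    (hvert : activeRank (A.map (Int.cast : ℤ → ℝ)) (fun i => (b i : ℝ)) x = n) :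
    ∀ j : Fin n, ∃ z : ℤ, x j = (z : ℝ) := by
  classical
  set Aℝ := A.map (Int.cast : ℤ → ℝ) with hAdef
  set S : Set (Fin n → ℝ) := {r : Fin n → ℝ | ∃ i, Aℝ i ⬝ᵥ x = (b i : ℝ) ∧ r = Aℝ i}
    with hSdef
  obtain ⟨t, hts, hspan, hli⟩ := exists_linearIndependent ℝ S
  have hfin : t.Finite := hli.setFinite
  haveI : Fintype t := hfin.fintype
  have hcard : t.toFinset.card = n := by
    have h1 : Module.finrank ℝ (Submodule.span ℝ t) = t.toFinset.card :=
      finrank_span_set_eq_card hli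
    rw [hspan] at h1
    exact h1.symm.trans hvert
  -- an equivalence `Fin n ≃ t`
  have e : Fin n ≃ t :=
    ((t.toFinset.equivFinOfCardEq hcard).symm.trans
      (Equiv.setCongr (Set.coe_toFinset t)))
  -- choose active row indices
  have hchoice : ∀ i : Fin n, ∃ k : Fin m,
      Aℝ k ⬝ᵥ x = (b k : ℝ) ∧ (e i : Fin n → ℝ) = Aℝ k := fun i => hts (e i).2
  choose f hact hrow using hchoice
  -- the square submatrix
  set B : Matrix (Fin n) (Fin n) ℤ := A.submatrix f id with hBdef
  have hBmap : B.map (Int.cast : ℤ → ℝ) = Aℝ.submatrix f id := by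
    rw [hAdef, hBdef]; ext i j; simp
  -- rows of the real submatrix are linearly independent
  have hrows : LinearIndependent ℝ (fun i => (Aℝ.submatrix f id) i) := by
    have : (fun i => (Aℝ.submatrix f id) i) = fun i => ((e i : Fin n → ℝ)) := by
      funext i
      rw [hrow i]
      rfl
    rw [this]
    exact hli.comp e e.injective
  have hUnit : IsUnit (Aℝ.submatrix f id) :=
    linearIndependent_rows_iff_isUnit.mp hrows
  have hdetR : (Aℝ.submatrix f id).det ≠ 0 :=
    (Matrix.isUnit_iff_isUnit_det _).mp hUnit |>.ne_zero
  have hdetcast : ((B.det : ℤ) : ℝ) = (Aℝ.submatrix f id).det := by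
    rw [← hBmap]
    exact RingHom.map_det (Int.castRingHom ℝ) B
  have hdetZ : B.det ≠ 0 := by
    intro h
    rw [h] at hdetcast
    exact hdetR (by simpa using hdetcast.symm)
  have hdetUnit : IsUnit B.det := by
    rcases hTU n f id with h | h | h
    · exact absurd h hdetZ
    · rw [h]; exact isUnit_one
    · rw [h]; exact isUnit_one.neg
  -- the integer inverse
  have hinv : B⁻¹ * B = 1 := Matrix.nonsing_inv_mul B hdetUnit
  -- real equation: submatrix * x = b∘f
  have hmul : (Aℝ.submatrix f id).mulVec x = fun i => ((b (f i) : ℤ) : ℝ) := by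
    funext i
    have : (Aℝ.submatrix f id).mulVec x i = Aℝ (f i) ⬝ᵥ x := by
      simp [Matrix.mulVec, Matrix.submatrix_apply, dotProduct]
    rw [this, hact i]
  have hmapmul : ∀ (M N : Matrix (Fin n) (Fin n) ℤ),
      (M * N).map (Int.cast : ℤ → ℝ) = M.map Int.cast * N.map Int.cast := by
    intro M N
    ext i j
    push_cast [Matrix.mul_apply, Matrix.map_apply]
    rfl
  have hinvR : (B⁻¹.map (Int.cast : ℤ → ℝ)) * (Aℝ.submatrix f id) = 1 := by
    rw [← hBmap, ← hmapmul, hinv, Matrix.map_one _ (by simp) (by simp)]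
  have hx : x = (B⁻¹.map (Int.cast : ℤ → ℝ)).mulVec (fun i => ((b (f i) : ℤ) : ℝ)) := by
    rw [← hmul, Matrix.mulVec_mulVec, hinvR, Matrix.one_mulVec]
  intro j
  refine ⟨(B⁻¹.mulVec (fun i => b (f i))) j, ?_⟩
  rw [hx]
  simp [Matrix.mulVec, dotProduct, Matrix.map_apply]
end

section
/- If A ∈ ℤ^{m×n} is totally unimodular, b ∈ ℤ^m, and max{c^T x : x ∈ ℝ^n, A x ≤ b, x ≥ 0} is feasible and bounded, then the supremum of c^T x over real feasible points equals the supremum of c^T x over integer feasible points: sup{c^T x : x ∈ ℝ^n, A x ≤ b, x ≥ 0} = sup{c^T x : x ∈ ℤ^n, A x ≤ b, x ≥ 0}. -/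
open Matrix

section aux

variable {m n : ℕ}

/-- The combined constraint matrix: rows of `A` followed by rows of `-I`. -/
def Bm (A : Matrix (Fin m) (Fin n) ℤ) : Matrix (Fin m ⊕ Fin n) (Fin n) ℝ :=
  fromRows (A.map (Int.cast : ℤ → ℝ)) (-1)

/-- Integer version of the combined constraint matrix. -/
def Bz (A : Matrix (Fin m) (Fin n) ℤ) : Matrix (Fin m ⊕ Fin n) (Fin n) ℤ :=
  fromRows A (-1)

/-- Combined right-hand side. -/
def bv (n : ℕ) (b : Fin m → ℤ) : (Fin m ⊕ Fin n) → ℤ := Sum.elim b 0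

lemma Bm_eq_map (A : Matrix (Fin m) (Fin n) ℤ) :
    Bm A = (Bz A).map (Int.cast : ℤ → ℝ) := by
  ext i j
  cases i with
  | inl i => rfl
  | inr i => simp [Bm, Bz, Matrix.one_apply, apply_ite]

lemma Bz_isTU (A : Matrix (Fin m) (Fin n) ℤ) (hTU : IsTU A) :
    (Bz A).IsTotallyUnimodular := by
  have hA : A.IsTotallyUnimodular := by
    intro k f g _ _
    rcases hTU k f g with h | h | h
    · exact ⟨0, by rw [h]; rfl⟩
    · exact ⟨1, by rw [h]; rfl⟩
    · exact ⟨-1, by rw [h]; rfl⟩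
  refine hA.fromRows_unitlike ?_
  intro _ i
  refine ⟨i, -1, ?_⟩
  ext j
  by_cases h : j = i
  · subst h; simp
  · simp [Matrix.one_apply, Ne.symm h, h]

lemma mulVec_inr (A : Matrix (Fin m) (Fin n) ℤ) (v : Fin n → ℝ) (j : Fin n) :
    (Bm A *ᵥ v) (Sum.inr j) = -(v j) := by
  simp [Bm, fromRows_mulVec, neg_mulVec]

lemma mulVec_inl (A : Matrix (Fin m) (Fin n) ℤ) (v : Fin n → ℝ) (i : Fin m) :
    (Bm A *ᵥ v) (Sum.inl i) = ((A.map (Int.cast : ℤ → ℝ)) *ᵥ v) i := by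
  simp [Bm, fromRows_mulVec]

lemma feas_iff (A : Matrix (Fin m) (Fin n) ℤ) (b : Fin m → ℤ) (x : Fin n → ℝ) :
    ((A.map (Int.cast : ℤ → ℝ)) *ᵥ x ≤ (fun i => (b i : ℝ)) ∧ 0 ≤ x) ↔
      Bm A *ᵥ x ≤ fun i => ((bv n b i : ℤ) : ℝ) := by
  constructor
  · rintro ⟨h1, h2⟩ (i | j)
    · simpa [mulVec_inl, bv] using h1 i
    · simpa [mulVec_inr, bv] using h2 j
  · intro h
    constructor
    · intro i
      simpa [mulVec_inl, bv] using h (Sum.inl i)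
    · intro j
      have := h (Sum.inr j)
      simp only [mulVec_inr, bv] at this
      simpa using this

end aux

section aux2

variable {m n : ℕ} {A : Matrix (Fin m) (Fin n) ℤ} {b : Fin m → ℤ} {c : Fin n → ℝ}

lemma no_ray
    (hbdd : ∃ M : ℝ, ∀ x : Fin n → ℝ,
      (A.map (Int.cast : ℤ → ℝ)).mulVec x ≤ (fun i => (b i : ℝ)) → 0 ≤ x → c ⬝ᵥ x ≤ M)
    {x : Fin n → ℝ} (hx : Bm A *ᵥ x ≤ fun i => ((bv n b i : ℤ) : ℝ))
    {d : Fin n → ℝ} (hd : ∀ i, (Bm A *ᵥ d) i ≤ 0) (hcd : 0 < c ⬝ᵥ d) : False := by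
  obtain ⟨M, hM⟩ := hbdd
  have hfeas : ∀ t : ℝ, 0 ≤ t → Bm A *ᵥ (x + t • d) ≤ fun i => ((bv n b i : ℤ) : ℝ) := by
    intro t ht i
    have : (Bm A *ᵥ (x + t • d)) i = (Bm A *ᵥ x) i + t * (Bm A *ᵥ d) i := by
      rw [mulVec_add, mulVec_smul]; rfl
    rw [this]
    have h1 : t * (Bm A *ᵥ d) i ≤ 0 := mul_nonpos_of_nonneg_of_nonpos ht (hd i)
    have := hx i
    linarith
  set t : ℝ := max ((M - c ⬝ᵥ x + 1) / (c ⬝ᵥ d)) 0 with ht_def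
  have ht : 0 ≤ t := le_max_right _ _
  have hle : c ⬝ᵥ (x + t • d) ≤ M := by
    have := (feas_iff A b (x + t • d)).2 (hfeas t ht)
    exact hM _ this.1 this.2
  have hval : c ⬝ᵥ (x + t • d) = c ⬝ᵥ x + t * (c ⬝ᵥ d) := by
    rw [dotProduct_add, dotProduct_smul]; rfl
  have h2 : (M - c ⬝ᵥ x + 1) / (c ⬝ᵥ d) * (c ⬝ᵥ d) ≤ t * (c ⬝ᵥ d) :=
    mul_le_mul_of_nonneg_right (le_max_left _ _) hcd.le
  rw [div_mul_cancel₀ _ (ne_of_gt hcd)] at h2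
  rw [hval] at hle
  linarith

lemma d_zero_of_all (A : Matrix (Fin m) (Fin n) ℤ) {d : Fin n → ℝ}
    (h : ∀ i, (Bm A *ᵥ d) i = 0) : d = 0 := by
  funext j
  have := h (Sum.inr j)
  rw [mulVec_inr] at this
  simpa using (neg_eq_zero.mp this)

/-- Purification: every feasible point is dominated by a feasible point whose tight
constraints have full rank. -/
lemma purify
    (hbdd : ∃ M : ℝ, ∀ x : Fin n → ℝ,
      (A.map (Int.cast : ℤ → ℝ)).mulVec x ≤ (fun i => (b i : ℝ)) → 0 ≤ x → c ⬝ᵥ x ≤ M)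
    (k : ℕ) :
    ∀ x : Fin n → ℝ, (Bm A *ᵥ x ≤ fun i => ((bv n b i : ℤ) : ℝ)) →
      (Finset.univ.filter (fun i => (Bm A *ᵥ x) i ≠ ((bv n b i : ℤ) : ℝ))).card ≤ k →
      ∃ y : Fin n → ℝ, (Bm A *ᵥ y ≤ fun i => ((bv n b i : ℤ) : ℝ)) ∧ c ⬝ᵥ x ≤ c ⬝ᵥ y ∧
        (∀ d : Fin n → ℝ,
          (∀ i, (Bm A *ᵥ y) i = ((bv n b i : ℤ) : ℝ) → (Bm A *ᵥ d) i = 0) → d = 0) := by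
  induction k with
  | zero =>
    intro x hx hcard
    refine ⟨x, hx, le_refl _, ?_⟩
    intro d hd
    have hall : ∀ i, (Bm A *ᵥ x) i = ((bv n b i : ℤ) : ℝ) := by
      intro i
      by_contra hne
      have : i ∈ Finset.univ.filter (fun i => (Bm A *ᵥ x) i ≠ ((bv n b i : ℤ) : ℝ)) := by
        simp [hne]
      have := Finset.card_pos.mpr ⟨i, this⟩
      omega
    exact d_zero_of_all A (fun i => hd i (hall i))
  | succ k ih =>
    intro x hx hcard
    by_cases hbasic : ∀ d : Fin n → ℝ,
        (∀ i, (Bm A *ᵥ x) i = ((bv n b i : ℤ) : ℝ) → (Bm A *ᵥ d) i = 0) → d = 0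
    · exact ⟨x, hx, le_refl _, hbasic⟩
    push_neg at hbasic
    obtain ⟨d₀, hd₀orth, hd₀ne⟩ := hbasic
    -- choose a direction d with  c⬝d ≥ 0  and some strictly positive constraint slope
    have hdir : ∃ d : Fin n → ℝ,
        (∀ i, (Bm A *ᵥ x) i = ((bv n b i : ℤ) : ℝ) → (Bm A *ᵥ d) i = 0) ∧
        0 ≤ c ⬝ᵥ d ∧ ∃ i, 0 < (Bm A *ᵥ d) i := by
      have hnegorth : ∀ i, (Bm A *ᵥ x) i = ((bv n b i : ℤ) : ℝ) → (Bm A *ᵥ (-d₀)) i = 0 := by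
        intro i hi
        rw [mulVec_neg]
        simpa using hd₀orth i hi
      have hcdneg : c ⬝ᵥ (-d₀) = -(c ⬝ᵥ d₀) := dotProduct_neg c d₀
      rcases lt_trichotomy (c ⬝ᵥ d₀) 0 with hc | hc | hc
      · refine ⟨-d₀, hnegorth, by rw [hcdneg]; linarith, ?_⟩
        by_contra hno
        push_neg at hno
        exact no_ray hbdd hx (fun i => hno i) (by rw [hcdneg]; linarith)
      · by_cases hpos : ∃ i, 0 < (Bm A *ᵥ d₀) i
        · exact ⟨d₀, hd₀orth, by rw [hc], hpos⟩
        · refine ⟨-d₀, hnegorth, by rw [hcdneg, hc]; simp, ?_⟩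
          by_contra hno
          push_neg at hno hpos
          refine hd₀ne (d_zero_of_all A ?_)
          intro i
          have h1 := hpos i
          have h2 := hno i
          rw [mulVec_neg] at h2
          have : -(Bm A *ᵥ d₀) i ≤ 0 := h2
          linarith
      · refine ⟨d₀, hd₀orth, hc.le, ?_⟩
        by_contra hno
        push_neg at hno
        exact no_ray hbdd hx (fun i => hno i) hc
    obtain ⟨d, hdorth, hcd, hdpos⟩ := hdir
    set Φ : Finset (Fin m ⊕ Fin n) := Finset.univ.filter (fun i => 0 < (Bm A *ᵥ d) i) with hΦ
    have hΦne : Φ.Nonempty := by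
      obtain ⟨i, hi⟩ := hdpos
      exact ⟨i, by simp [hΦ, hi]⟩
    obtain ⟨i₀, hi₀Φ, hi₀min⟩ := Φ.exists_min_image
      (fun i => (((bv n b i : ℤ) : ℝ) - (Bm A *ᵥ x) i) / (Bm A *ᵥ d) i) hΦne
    have hi₀pos : 0 < (Bm A *ᵥ d) i₀ := by
      simpa [hΦ] using hi₀Φ
    set t : ℝ := (((bv n b i₀ : ℤ) : ℝ) - (Bm A *ᵥ x) i₀) / (Bm A *ᵥ d) i₀ with htdef
    have ht0 : 0 ≤ t := div_nonneg (by have := hx i₀; linarith) hi₀pos.le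
    set y : Fin n → ℝ := x + t • d with hydef
    have hyv : ∀ i, (Bm A *ᵥ y) i = (Bm A *ᵥ x) i + t * (Bm A *ᵥ d) i := by
      intro i; rw [hydef, mulVec_add, mulVec_smul]; rfl
    have hyfeas : Bm A *ᵥ y ≤ fun i => ((bv n b i : ℤ) : ℝ) := by
      intro i
      rw [hyv i]
      rcases le_or_gt ((Bm A *ᵥ d) i) 0 with hle | hlt
      · have := hx i
        have : t * (Bm A *ᵥ d) i ≤ 0 := mul_nonpos_of_nonneg_of_nonpos ht0 hle
        have := hx i
        linarith
      · have hiΦ : i ∈ Φ := by simp [hΦ, hlt]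
        have := hi₀min i hiΦ
        have h2 : t * (Bm A *ᵥ d) i ≤
            ((((bv n b i : ℤ) : ℝ) - (Bm A *ᵥ x) i) / (Bm A *ᵥ d) i) * (Bm A *ᵥ d) i :=
          mul_le_mul_of_nonneg_right this hlt.le
        rw [div_mul_cancel₀ _ (ne_of_gt hlt)] at h2
        linarith
    have htight : ∀ i, (Bm A *ᵥ x) i = ((bv n b i : ℤ) : ℝ) →
        (Bm A *ᵥ y) i = ((bv n b i : ℤ) : ℝ) := by
      intro i hi
      rw [hyv i, hdorth i hi, mul_zero, add_zero, hi]
    have hi₀tight : (Bm A *ᵥ y) i₀ = ((bv n b i₀ : ℤ) : ℝ) := by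
      rw [hyv i₀, htdef, div_mul_cancel₀ _ (ne_of_gt hi₀pos)]
      ring
    have hi₀nt : (Bm A *ᵥ x) i₀ ≠ ((bv n b i₀ : ℤ) : ℝ) := by
      intro hcontra
      have := hdorth i₀ hcontra
      linarith
    have hsub : Finset.univ.filter (fun i => (Bm A *ᵥ y) i ≠ ((bv n b i : ℤ) : ℝ)) ⊆
        (Finset.univ.filter (fun i => (Bm A *ᵥ x) i ≠ ((bv n b i : ℤ) : ℝ))).erase i₀ := by
      intro i hi
      simp only [Finset.mem_filter, Finset.mem_univ, true_and] at hi
      refine Finset.mem_erase.mpr ⟨?_, ?_⟩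
      · rintro rfl; exact hi hi₀tight
      · simp only [Finset.mem_filter, Finset.mem_univ, true_and]
        intro hti
        exact hi (htight i hti)
    have hcard' : (Finset.univ.filter
        (fun i => (Bm A *ᵥ y) i ≠ ((bv n b i : ℤ) : ℝ))).card ≤ k := by
      have h1 := Finset.card_le_card hsub
      have h2 : ((Finset.univ.filter
          (fun i => (Bm A *ᵥ x) i ≠ ((bv n b i : ℤ) : ℝ))).erase i₀).card =
          (Finset.univ.filter
          (fun i => (Bm A *ᵥ x) i ≠ ((bv n b i : ℤ) : ℝ))).card - 1 :=
        Finset.card_erase_of_mem (Finset.mem_filter.mpr ⟨Finset.mem_univ _, hi₀nt⟩)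
      omega
    obtain ⟨y', hy'1, hy'2, hy'3⟩ := ih y hyfeas hcard'
    refine ⟨y', hy'1, le_trans ?_ hy'2, hy'3⟩
    have : c ⬝ᵥ y = c ⬝ᵥ x + t * (c ⬝ᵥ d) := by
      rw [hydef, dotProduct_add, dotProduct_smul]; rfl
    rw [this]
    nlinarith [mul_nonneg ht0 hcd]

end aux2

section aux3

variable {m n : ℕ}

lemma basic_integral (A : Matrix (Fin m) (Fin n) ℤ) (b : Fin m → ℤ) (hTU : IsTU A)
    {y : Fin n → ℝ}
    (hbasic : ∀ d : Fin n → ℝ,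
      (∀ i, (Bm A *ᵥ y) i = ((bv n b i : ℤ) : ℝ) → (Bm A *ᵥ d) i = 0) → d = 0) :
    ∃ z : Fin n → ℤ, (fun j => ((z j : ℤ) : ℝ)) = y := by
  classical
  set T : Set (Fin m ⊕ Fin n) := {i | (Bm A *ᵥ y) i = ((bv n b i : ℤ) : ℝ)} with hT
  set S : Set (Fin n → ℝ) := (fun i => Bm A i) '' T with hS
  have hrowdot : ∀ (r d : Fin n → ℝ), r ⬝ᵥ d = ∑ j, r j * d j := fun _ _ => rfl
  -- tight rows span everything
  have hspan : Submodule.span ℝ S = ⊤ := by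
    by_contra h
    obtain ⟨φ, hφne, hφbot⟩ := Submodule.exists_dual_map_eq_bot_of_lt_top
      (lt_top_iff_ne_top.mpr h) inferInstance
    have hφS : ∀ v ∈ Submodule.span ℝ S, φ v = 0 := by
      intro v hv
      have : φ v ∈ (Submodule.span ℝ S).map φ := Submodule.mem_map_of_mem hv
      rw [hφbot] at this
      simpa using this
    set d : Fin n → ℝ := fun j => φ (fun k => if j = k then (1 : ℝ) else 0) with hd
    have hrow : ∀ r : Fin n → ℝ, r ⬝ᵥ d = φ r := by
      intro r
      conv_rhs => rw [pi_eq_sum_univ r]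
      rw [map_sum]
      simp only [_root_.map_smul, smul_eq_mul]
      rfl
    have hdtight : ∀ i, (Bm A *ᵥ y) i = ((bv n b i : ℤ) : ℝ) → (Bm A *ᵥ d) i = 0 := by
      intro i hi
      have : (Bm A *ᵥ d) i = Bm A i ⬝ᵥ d := rfl
      rw [this, hrow]
      exact hφS _ (Submodule.subset_span ⟨i, hi, rfl⟩)
    have hd0 : d = 0 := hbasic d hdtight
    apply hφne
    apply LinearMap.ext
    intro v
    rw [← hrow v, hd0]
    simp
  -- extract a basis from the tight rows
  obtain ⟨t, htS, htspan, htli⟩ := exists_linearIndependent ℝ S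
  have htfin : t.Finite := htli.setFinite
  haveI : Fintype t := htfin.fintype
  have hbasis : Module.Basis t ℝ (Fin n → ℝ) :=
    Module.Basis.mk htli (by rw [Subtype.range_coe, htspan, hspan])
  have hcard : Fintype.card t = n := by
    have h1 := Module.finrank_eq_card_basis hbasis
    have h2 : Module.finrank ℝ (Fin n → ℝ) = n := by
      simp [Module.finrank_fin_fun]
    omega
  set e : Fin n ≃ t := (Fintype.equivFinOfCardEq hcard).symm with he
  have hmem : ∀ k : Fin n, ((e k : Fin n → ℝ)) ∈ S := fun k => htS (e k).2
  choose idx hidxT hidxrow using fun k => hmem k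
  set M : Matrix (Fin n) (Fin n) ℤ := (Bz A).submatrix idx id with hM
  set M' : Matrix (Fin n) (Fin n) ℝ := (Bm A).submatrix idx id with hM'
  have hM'map : M' = M.map (Int.cast : ℤ → ℝ) := by
    rw [hM', hM, Bm_eq_map, Matrix.submatrix_map]
  have hM'rows : LinearIndependent ℝ (fun k => M' k) := by
    have : (fun k => M' k) = fun k => ((e k : Fin n → ℝ)) := by
      funext k
      rw [← hidxrow k]
      rfl
    rw [this]
    exact htli.comp e e.injective
  have hM'unit : IsUnit M' := linearIndependent_rows_iff_isUnit.mp hM'rows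
  have hM'det : M'.det ≠ 0 := by
    intro h
    have := (Matrix.isUnit_iff_isUnit_det M').mp hM'unit
    rw [h] at this
    exact (by simpa using this : False)
  have hdetcast : ((M.det : ℤ) : ℝ) = M'.det := by
    rw [hM'map]
    exact (RingHom.map_det (Int.castRingHom ℝ) M)
  have hMdetunit : IsUnit M.det := by
    have hTUB := Bz_isTU A hTU
    rw [Matrix.isTotallyUnimodular_iff] at hTUB
    obtain ⟨s, hs⟩ := hTUB n idx id
    rcases s with _ | _ | _
    · exfalso
      apply hM'det
      rw [← hdetcast, ← hs]
      simp
    · rw [← hs]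
      simp
    · rw [← hs]
      simp
  -- the integral solution
  set z : Fin n → ℤ := M⁻¹ *ᵥ (fun k => bv n b (idx k)) with hz
  have hMz : M *ᵥ z = fun k => bv n b (idx k) := by
    rw [hz, mulVec_mulVec, Matrix.mul_nonsing_inv _ hMdetunit, one_mulVec]
  have hM'y : M' *ᵥ y = fun k => ((bv n b (idx k) : ℤ) : ℝ) := by
    funext k
    have h1 : (M' *ᵥ y) k = (Bm A *ᵥ y) (idx k) := rfl
    rw [h1, hidxT k]
  have hM'z : M' *ᵥ (fun j => ((z j : ℤ) : ℝ)) = fun k => ((bv n b (idx k) : ℤ) : ℝ) := by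
    funext k
    rw [hM'map]
    have := (RingHom.map_mulVec (Int.castRingHom ℝ) M z k).symm
    have h2 : (M.map (Int.cast : ℤ → ℝ) *ᵥ fun j => ((z j : ℤ) : ℝ)) k
        = ((M *ᵥ z) k : ℤ) := by
      exact this
    rw [h2, hMz]
  have hinj : Function.Injective (M' *ᵥ ·) := mulVec_injective_iff_isUnit.mpr hM'unit
  exact ⟨z, hinj (hM'z.trans hM'y.symm)⟩

end aux3

section key

variable {m n : ℕ}

lemma cast_feas (A : Matrix (Fin m) (Fin n) ℤ) (b : Fin m → ℤ) (z : Fin n → ℤ) :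
    (A.mulVec z ≤ b ∧ 0 ≤ z) ↔
      ((A.map (Int.cast : ℤ → ℝ)).mulVec (fun j => ((z j : ℤ) : ℝ)) ≤ (fun i => (b i : ℝ)) ∧
        0 ≤ (fun j => ((z j : ℤ) : ℝ))) := by
  have hcast : ∀ i, ((A.map (Int.cast : ℤ → ℝ)).mulVec (fun j => ((z j : ℤ) : ℝ))) i
      = (((A.mulVec z) i : ℤ) : ℝ) := by
    intro i
    exact (RingHom.map_mulVec (Int.castRingHom ℝ) A z i).symm
  constructor
  · rintro ⟨h1, h2⟩
    refine ⟨fun i => ?_, fun j => ?_⟩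
    · rw [hcast i]
      show (((A.mulVec z) i : ℤ) : ℝ) ≤ ((b i : ℤ) : ℝ)
      exact_mod_cast h1 i
    · show (0 : ℝ) ≤ ((z j : ℤ) : ℝ)
      exact_mod_cast h2 j
  · rintro ⟨h1, h2⟩
    refine ⟨fun i => ?_, fun j => ?_⟩
    · have := h1 i
      rw [hcast i] at this
      have h3 : (((A.mulVec z) i : ℤ) : ℝ) ≤ ((b i : ℤ) : ℝ) := this
      exact_mod_cast h3
    · have h3 : (0 : ℝ) ≤ ((z j : ℤ) : ℝ) := h2 j
      exact_mod_cast h3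

lemma key (A : Matrix (Fin m) (Fin n) ℤ) (b : Fin m → ℤ) (c : Fin n → ℝ) (hTU : IsTU A)
    (hbdd : ∃ M : ℝ, ∀ x : Fin n → ℝ,
      (A.map (Int.cast : ℤ → ℝ)).mulVec x ≤ (fun i => (b i : ℝ)) → 0 ≤ x → c ⬝ᵥ x ≤ M)
    (x : Fin n → ℝ)
    (hx1 : (A.map (Int.cast : ℤ → ℝ)).mulVec x ≤ (fun i => (b i : ℝ))) (hx2 : 0 ≤ x) :
    ∃ z : Fin n → ℤ, (A.mulVec z ≤ b ∧ 0 ≤ z) ∧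
      c ⬝ᵥ x ≤ c ⬝ᵥ (fun j => ((z j : ℤ) : ℝ)) := by
  have hxfeas : Bm A *ᵥ x ≤ fun i => ((bv n b i : ℤ) : ℝ) := (feas_iff A b x).1 ⟨hx1, hx2⟩
  obtain ⟨y, hy1, hy2, hy3⟩ := purify (A := A) (b := b) (c := c) hbdd
    (Finset.univ.filter (fun i => (Bm A *ᵥ x) i ≠ ((bv n b i : ℤ) : ℝ))).card
    x hxfeas le_rfl
  obtain ⟨z, hz⟩ := basic_integral A b hTU hy3
  refine ⟨z, ?_, ?_⟩
  · rw [cast_feas, hz]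
    exact (feas_iff A b y).2 hy1
  · rw [show c ⬝ᵥ (fun j => ((z j : ℤ) : ℝ)) = c ⬝ᵥ y by rw [hz]]
    exact hy2

end key


/-- If `A` is totally unimodular, `b` integral, and `max {cᵀx : Ax ≤ b, x ≥ 0}` is
feasible and bounded, then the supremum of `cᵀx` over real feasible points equals
the supremum over integer feasible points. -/
theorem tu_lp_sup_eq_ip_sup {m n : ℕ}
    (A : Matrix (Fin m) (Fin n) ℤ) (b : Fin m → ℤ) (c : Fin n → ℝ) (hTU : IsTU A)
    (hfeas : ∃ x : Fin n → ℝ,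
      (A.map (Int.cast : ℤ → ℝ)).mulVec x ≤ (fun i => (b i : ℝ)) ∧ 0 ≤ x)
    (hbdd : ∃ M : ℝ, ∀ x : Fin n → ℝ,
      (A.map (Int.cast : ℤ → ℝ)).mulVec x ≤ (fun i => (b i : ℝ)) → 0 ≤ x → c ⬝ᵥ x ≤ M) :
    sSup {s : ℝ | ∃ x : Fin n → ℝ,
        ((A.map (Int.cast : ℤ → ℝ)).mulVec x ≤ (fun i => (b i : ℝ)) ∧ 0 ≤ x) ∧ s = c ⬝ᵥ x} =
      sSup {s : ℝ | ∃ x : Fin n → ℤ,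
        (A.mulVec x ≤ b ∧ 0 ≤ x) ∧ s = c ⬝ᵥ (fun j => (x j : ℝ))} := by
  obtain ⟨M, hM⟩ := hbdd
  set Sr : Set ℝ := {s : ℝ | ∃ x : Fin n → ℝ,
      ((A.map (Int.cast : ℤ → ℝ)).mulVec x ≤ (fun i => (b i : ℝ)) ∧ 0 ≤ x) ∧ s = c ⬝ᵥ x}
  set Si : Set ℝ := {s : ℝ | ∃ x : Fin n → ℤ,
      (A.mulVec x ≤ b ∧ 0 ≤ x) ∧ s = c ⬝ᵥ (fun j => (x j : ℝ))}
  have hSiSr : Si ⊆ Sr := by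
    rintro s ⟨z, hz, rfl⟩
    exact ⟨fun j => ((z j : ℤ) : ℝ), (cast_feas A b z).1 hz, rfl⟩
  obtain ⟨x₀, hx₀⟩ := hfeas
  obtain ⟨z₀, hz₀, -⟩ := key A b c hTU ⟨M, hM⟩ x₀ hx₀.1 hx₀.2
  have hSrne : Sr.Nonempty := ⟨c ⬝ᵥ x₀, x₀, hx₀, rfl⟩
  have hSine : Si.Nonempty := ⟨c ⬝ᵥ (fun j => ((z₀ j : ℤ) : ℝ)), z₀, hz₀, rfl⟩
  have hSrbdd : BddAbove Sr := by
    refine ⟨M, ?_⟩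
    rintro s ⟨x, hx, rfl⟩
    exact hM x hx.1 hx.2
  have hSibdd : BddAbove Si := hSrbdd.mono hSiSr
  apply le_antisymm
  · apply csSup_le hSrne
    rintro s ⟨x, hx, rfl⟩
    obtain ⟨z, hz, hle⟩ := key A b c hTU ⟨M, hM⟩ x hx.1 hx.2
    exact le_trans hle (le_csSup hSibdd ⟨z, hz, rfl⟩)
  · exact csSup_le_csSup hSrbdd hSine hSiSr
end

section
/- (Egerváry's theorem) Let G = (V,E) be a bipartite graph and let w : E → ℕ_0 be edge weights. Then the maximum weight w(M) over all matchings M of G equals the minimum value Σ_{v∈V} y_v over all w-vertex covers y of G. -/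
open Finset

set_option linter.unusedSectionVars false

section EgervaryAux

/-- Auxiliary inductive set for the Mendelsohn–Dulmage style combination of two
one-sided matchings. -/
inductive MDB {V : Type*} (Ap Bp : V → Prop) (F Gn : V → V) : V → Prop
  | base (b : V) (hb : Bp b) (h : ∀ a : V, Ap a → F a ≠ b) : MDB Ap Bp F Gn b
  | step (b' b : V) (h' : MDB Ap Bp F Gn b') (hb : Bp b) (ha : Ap (Gn b'))
      (hf : F (Gn b') = b) : MDB Ap Bp F Gn b

variable {V : Type*} [Fintype V] [DecidableEq V]

/-- The endpoints of an edge, as a finset. -/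
def endp (e : Sym2 V) : Finset V := Finset.univ.filter (· ∈ e)

lemma endp_pair (u v : V) : endp s(u,v) = {u, v} := by
  ext x; simp [endp, Sym2.mem_iff]

lemma sum_endp (y : V → ℕ) {u v : V} (h : u ≠ v) :
    ∑ x ∈ endp s(u,v), y x = y u + y v := by
  rw [endp_pair, Finset.sum_pair h]

lemma edge_repr (G : SimpleGraph V) : ∀ e ∈ G.edgeSet, ∃ u v, e = s(u,v) ∧ G.Adj u v := by
  intro e
  induction e using Sym2.ind with
  | _ u v => intro h; exact ⟨u, v, rfl, h⟩

lemma weak_duality (G : SimpleGraph V) (w : Sym2 V → ℕ) (M : Finset (Sym2 V))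
    (hM : ∀ e ∈ M, e ∈ G.edgeSet)
    (hdisj : ∀ e₁ ∈ M, ∀ e₂ ∈ M, e₁ ≠ e₂ → ∀ v : V, ¬(v ∈ e₁ ∧ v ∈ e₂))
    (y : V → ℕ) (hy : ∀ u v, G.Adj u v → w s(u,v) ≤ y u + y v) :
    ∑ e ∈ M, w e ≤ ∑ v, y v := by
  have hpd : (M : Set (Sym2 V)).PairwiseDisjoint endp := by
    intro e₁ h₁ e₂ h₂ hne
    simp only [Function.onFun]
    rw [Finset.disjoint_left]
    intro x hx₁ hx₂
    simp only [endp, Finset.mem_filter] at hx₁ hx₂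
    exact hdisj e₁ h₁ e₂ h₂ hne x ⟨hx₁.2, hx₂.2⟩
  calc ∑ e ∈ M, w e ≤ ∑ e ∈ M, ∑ x ∈ endp e, y x := by
        apply Finset.sum_le_sum
        intro e he
        obtain ⟨u, v, rfl, hadj⟩ := edge_repr G e (hM e he)
        rw [sum_endp y hadj.ne]
        exact hy u v hadj
    _ = ∑ x ∈ M.biUnion endp, y x := (Finset.sum_biUnion hpd).symm
    _ ≤ ∑ v, y v := Finset.sum_le_sum_of_subset (Finset.subset_univ _)

lemma hall_cond (G : SimpleGraph V) (w : Sym2 V → ℕ) (y : V → ℕ)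
    (hy : ∀ u v : V, G.Adj u v → w s(u, v) ≤ y u + y v)
    (hmin : ∀ z : V → ℕ, (∀ u v : V, G.Adj u v → w s(u, v) ≤ z u + z v) →
      ∑ v, y v ≤ ∑ v, z v)
    (S : Finset V) (hSsupp : ∀ a ∈ S, 0 < y a)
    (hnoadj : ∀ a ∈ S, ∀ b ∈ S, ¬ G.Adj a b)
    (N : Finset V)
    (hN : ∀ b : V, b ∈ N ↔ ∃ a ∈ S, G.Adj a b ∧ w s(a, b) = y a + y b) :
    S.card ≤ N.card := by
  set y' : V → ℕ := fun v =>
    (y v - (if v ∈ S then 1 else 0)) + (if v ∈ N then 1 else 0) with hy'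
  have hcov : ∀ u v : V, G.Adj u v → w s(u, v) ≤ y' u + y' v := by
    intro u v hadj
    have hcov0 := hy u v hadj
    by_cases hu : u ∈ S
    · have hv : v ∉ S := fun hv => hnoadj u hu v hv hadj
      by_cases ht : w s(u, v) = y u + y v
      · have hvN : v ∈ N := (hN v).2 ⟨u, hu, hadj, ht⟩
        have : 0 < y u := hSsupp u hu
        simp only [hy', hu, hv, hvN, if_true, if_false, if_pos, if_neg]
        omega
      · have : w s(u, v) < y u + y v := lt_of_le_of_ne hcov0 ht
        simp only [hy', hu, hv, if_true, if_false]
        omega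
    · by_cases hv : v ∈ S
      · have ht0 : w s(v, u) = w s(u, v) := by rw [Sym2.eq_swap]
        by_cases ht : w s(u, v) = y u + y v
        · have huN : u ∈ N := (hN u).2 ⟨v, hv, hadj.symm, by rw [ht0, ht]; ring⟩
          have : 0 < y v := hSsupp v hv
          simp only [hy', hu, hv, huN, if_true, if_false]
          omega
        · have : w s(u, v) < y u + y v := lt_of_le_of_ne hcov0 ht
          simp only [hy', hu, hv, if_true, if_false]
          omega
      · simp only [hy', hu, hv, if_false]
        omega
  have hs1 : ∑ v : V, (if v ∈ S then 1 else 0) = S.card := by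
    rw [Finset.sum_ite_mem, Finset.univ_inter, Finset.card_eq_sum_ones]
  have hs2 : ∑ v : V, (if v ∈ N then 1 else 0) = N.card := by
    rw [Finset.sum_ite_mem, Finset.univ_inter, Finset.card_eq_sum_ones]
  have hsum1 : ∑ v : V, (y v - (if v ∈ S then 1 else 0)) + S.card = ∑ v, y v := by
    rw [← hs1, ← Finset.sum_add_distrib]
    apply Finset.sum_congr rfl
    intro v _
    by_cases hv : v ∈ S
    · have := hSsupp v hv; simp [hv]; omega
    · simp [hv]
  have hsum2 : ∑ v : V, y' v = (∑ v : V, (y v - (if v ∈ S then 1 else 0))) + N.card := by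
    rw [hy', Finset.sum_add_distrib, hs2]
  have := hmin y' hcov
  omega

lemma exists_tight_inj (G : SimpleGraph V) (w : Sym2 V → ℕ) (y : V → ℕ)
    (hy : ∀ u v : V, G.Adj u v → w s(u, v) ≤ y u + y v)
    (hmin : ∀ z : V → ℕ, (∀ u v : V, G.Adj u v → w s(u, v) ≤ z u + z v) →
      ∑ v, y v ≤ ∑ v, z v)
    (P : V → Prop) (hP : ∀ a b : V, P a → P b → ¬ G.Adj a b) :
    ∃ F : V → V,
      (∀ a₁ a₂ : V, (P a₁ ∧ 0 < y a₁) → (P a₂ ∧ 0 < y a₂) → F a₁ = F a₂ → a₁ = a₂) ∧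
      (∀ a : V, (P a ∧ 0 < y a) → G.Adj a (F a) ∧ w s(a, F a) = y a + y (F a)) := by
  classical
  set ι := {a : V // P a ∧ 0 < y a}
  set t : ι → Finset V :=
    fun a => univ.filter (fun b => G.Adj a.1 b ∧ w s(a.1, b) = y a.1 + y b) with ht
  have hall : ∀ S : Finset ι, S.card ≤ (S.biUnion t).card := by
    intro S
    set S' : Finset V := S.image Subtype.val with hS'
    have hcard : S'.card = S.card :=
      Finset.card_image_of_injective _ Subtype.val_injective
    have hbu : S.biUnion t =
        univ.filter (fun b => ∃ a ∈ S', G.Adj a b ∧ w s(a, b) = y a + y b) := by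
      ext b
      simp only [Finset.mem_biUnion, Finset.mem_filter, Finset.mem_univ, true_and,
        hS', Finset.mem_image, ht]
      constructor
      · rintro ⟨a, ha, hb⟩; exact ⟨a.1, ⟨a, ha, rfl⟩, hb⟩
      · rintro ⟨a, ⟨a', ha', rfl⟩, hb⟩; exact ⟨a', ha', hb⟩
    rw [← hcard, hbu]
    apply hall_cond G w y hy hmin S'
    · intro a ha
      obtain ⟨a', _, rfl⟩ := Finset.mem_image.1 ha
      exact a'.2.2
    · intro a ha b hb
      obtain ⟨a', _, rfl⟩ := Finset.mem_image.1 ha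
      obtain ⟨b', _, rfl⟩ := Finset.mem_image.1 hb
      exact hP _ _ a'.2.1 b'.2.1
    · intro b; simp
  obtain ⟨f, hfinj, hft⟩ := (Finset.all_card_le_biUnion_card_iff_exists_injective t).1 hall
  refine ⟨fun a => if h : P a ∧ 0 < y a then f ⟨a, h⟩ else a, ?_, ?_⟩
  · intro a₁ a₂ h₁ h₂ heq
    simp only [dif_pos h₁, dif_pos h₂] at heq
    exact congrArg Subtype.val (hfinj heq)
  · intro a h
    simp only [dif_pos h]
    have := hft ⟨a, h⟩
    simp only [ht, Finset.mem_filter] at this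
    exact this.2

end EgervaryAux

section EgervaryAux2
variable {V : Type*} [Fintype V] [DecidableEq V]

lemma exists_opt_matching (G : SimpleGraph V) (s : Set V)
    (hs : ∀ u v : V, G.Adj u v → (u ∈ s ∧ v ∉ s) ∨ (u ∉ s ∧ v ∈ s))
    (w : Sym2 V → ℕ) (y : V → ℕ)
    (hy : ∀ u v : V, G.Adj u v → w s(u, v) ≤ y u + y v)
    (hmin : ∀ z : V → ℕ, (∀ u v : V, G.Adj u v → w s(u, v) ≤ z u + z v) →
      ∑ v, y v ≤ ∑ v, z v) :
    ∃ M : Finset (Sym2 V), (∀ e ∈ M, e ∈ G.edgeSet) ∧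
      (∀ e₁ ∈ M, ∀ e₂ ∈ M, e₁ ≠ e₂ → ∀ v : V, ¬(v ∈ e₁ ∧ v ∈ e₂)) ∧
      ∑ v, y v ≤ ∑ e ∈ M, w e := by
  classical
  have hside : ∀ u v : V, G.Adj u v → u ∈ s → v ∉ s := by
    intro u v h hu
    rcases hs u v h with ⟨_, h2⟩ | ⟨h1, _⟩
    · exact h2
    · exact absurd hu h1
  have hside' : ∀ u v : V, G.Adj u v → u ∉ s → v ∈ s := by
    intro u v h hu
    rcases hs u v h with ⟨h1, _⟩ | ⟨_, h2⟩
    · exact absurd h1 hu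
    · exact h2
  obtain ⟨F, hFinj, hFt⟩ := exists_tight_inj G w y hy hmin (· ∈ s)
    (fun a b ha hb hadj => (hside a b hadj ha) hb)
  obtain ⟨Gn, hGinj, hGt⟩ := exists_tight_inj G w y hy hmin (· ∉ s)
    (fun a b ha hb hadj => hb (hside' a b hadj ha))
  set Ap : V → Prop := fun a => a ∈ s ∧ 0 < y a with hApdef
  set Bp : V → Prop := fun b => b ∉ s ∧ 0 < y b with hBpdef
  have hFB : ∀ a : V, Ap a → F a ∉ s := fun a ha => hside a (F a) (hFt a ha).1 ha.1
  have hGA : ∀ b : V, Bp b → Gn b ∈ s := fun b hb => hside' b (Gn b) (hGt b hb).1 hb.1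
  set B1 : Finset V := univ.filter (MDB Ap Bp F Gn) with hB1
  have hB1mem : ∀ b : V, b ∈ B1 ↔ MDB Ap Bp F Gn b := by
    intro b; rw [hB1, mem_filter]; simp
  have hB1Bp : ∀ b ∈ B1, Bp b := by
    intro b hb
    cases (hB1mem b).1 hb with
    | base _ hb' _ => exact hb'
    | step _ _ _ hb' _ _ => exact hb'
  set AF : Finset V := univ.filter (fun a => Ap a ∧ ∀ b ∈ B1, Gn b ≠ a) with hAFdef
  have hAFmem : ∀ a : V, a ∈ AF ↔ Ap a ∧ ∀ b ∈ B1, Gn b ≠ a := by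
    intro a; rw [hAFdef, mem_filter]; simp
  set M : Finset (Sym2 V) :=
    B1.image (fun b => s(Gn b, b)) ∪ AF.image (fun a => s(a, F a)) with hMdef
  have hmemM : ∀ e : Sym2 V, e ∈ M ↔
      (∃ b ∈ B1, e = s(Gn b, b)) ∨ (∃ a ∈ AF, e = s(a, F a)) := by
    intro e
    rw [hMdef, mem_union, mem_image, mem_image]
    constructor
    · rintro (⟨b, hb, rfl⟩ | ⟨a, ha, rfl⟩)
      · exact Or.inl ⟨b, hb, rfl⟩
      · exact Or.inr ⟨a, ha, rfl⟩
    · rintro (⟨b, hb, rfl⟩ | ⟨a, ha, rfl⟩)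
      · exact Or.inl ⟨b, hb, rfl⟩
      · exact Or.inr ⟨a, ha, rfl⟩
  -- tightness of every edge of M
  have htight : ∀ e ∈ M, ∃ u v : V, e = s(u, v) ∧ G.Adj u v ∧ w e = y u + y v := by
    intro e he
    rcases (hmemM e).1 he with ⟨b, hb, rfl⟩ | ⟨a, ha, rfl⟩
    · have hBp := hB1Bp b hb
      have ht := hGt b hBp
      refine ⟨Gn b, b, rfl, ht.1.symm, ?_⟩
      rw [Sym2.eq_swap, ht.2, Nat.add_comm]
    · have hAp := ((hAFmem a).1 ha).1
      have ht := hFt a hAp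
      exact ⟨a, F a, rfl, ht.1, ht.2⟩
  have hMedge : ∀ e ∈ M, e ∈ G.edgeSet := by
    intro e he
    obtain ⟨u, v, rfl, hadj, _⟩ := htight e he
    exact hadj
  -- cross disjointness
  have hcross : ∀ b ∈ B1, ∀ a ∈ AF, ∀ x : V, x ∈ s(Gn b, b) → x ∈ s(a, F a) → False := by
    intro b hb a ha x hx1 hx2
    rw [Sym2.mem_iff] at hx1 hx2
    obtain ⟨hAp, hnotG⟩ := (hAFmem a).1 ha
    have hBpb := hB1Bp b hb
    rcases hx1 with rfl | rfl
    · rcases hx2 with heq | heq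
      · exact hnotG b hb heq
      · exact (hFB a hAp) (heq ▸ hGA b hBpb)
    · rcases hx2 with heq | heq
      · exact hBpb.1 (heq ▸ hAp.1)
      · cases (hB1mem x).1 hb with
        | base _ _ hall => exact hall a hAp heq.symm
        | step b' _ h' _ ha' hf =>
          have hba : Gn b' = a := hFinj (Gn b') a ha' hAp (hf.trans heq)
          exact hnotG b' ((hB1mem b').2 h') hba
  have hdisjM : ∀ e₁ ∈ M, ∀ e₂ ∈ M, e₁ ≠ e₂ → ∀ v : V, ¬(v ∈ e₁ ∧ v ∈ e₂) := by
    intro e₁ h₁ e₂ h₂ hne x ⟨hx₁, hx₂⟩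
    rcases (hmemM e₁).1 h₁ with ⟨b₁, hb₁, rfl⟩ | ⟨a₁, ha₁, rfl⟩ <;>
      rcases (hmemM e₂).1 h₂ with ⟨b₂, hb₂, rfl⟩ | ⟨a₂, ha₂, rfl⟩
    · -- both g-edges
      have hBp₁ := hB1Bp b₁ hb₁
      have hBp₂ := hB1Bp b₂ hb₂
      rw [Sym2.mem_iff] at hx₁ hx₂
      rcases hx₁ with rfl | rfl <;> rcases hx₂ with heq | heq
      · exact hne (by rw [hGinj b₁ b₂ hBp₁ hBp₂ heq])
      · exact hBp₂.1 (heq ▸ hGA b₁ hBp₁)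
      · exact hBp₁.1 (heq.symm ▸ hGA b₂ hBp₂) |>.elim
      · exact hne (by rw [heq])
    · exact hcross b₁ hb₁ a₂ ha₂ x hx₁ hx₂
    · exact hcross b₂ hb₂ a₁ ha₁ x hx₂ hx₁
    · -- both f-edges
      have hAp₁ := ((hAFmem a₁).1 ha₁).1
      have hAp₂ := ((hAFmem a₂).1 ha₂).1
      rw [Sym2.mem_iff] at hx₁ hx₂
      rcases hx₁ with rfl | rfl <;> rcases hx₂ with heq | heq
      · exact hne (by rw [heq])
      · exact (hFB a₂ hAp₂) (heq ▸ hAp₁.1)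
      · exact (hFB a₁ hAp₁) (heq.symm ▸ hAp₂.1)
      · exact hne (by rw [hFinj a₁ a₂ hAp₁ hAp₂ heq])
  -- saturation
  have hsat : ∀ x : V, 0 < y x → ∃ e ∈ M, x ∈ e := by
    intro x hx
    by_cases hxs : x ∈ s
    · have hAp : Ap x := ⟨hxs, hx⟩
      by_cases h : ∃ b ∈ B1, Gn b = x
      · obtain ⟨b, hb, hgb⟩ := h
        refine ⟨s(Gn b, b), (hmemM _).2 (Or.inl ⟨b, hb, rfl⟩), ?_⟩
        rw [hgb]; exact Sym2.mem_mk_left x b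
      · push_neg at h
        exact ⟨s(x, F x), (hmemM _).2 (Or.inr ⟨x, (hAFmem x).2 ⟨hAp, h⟩, rfl⟩),
          Sym2.mem_mk_left x (F x)⟩
    · have hBp : Bp x := ⟨hxs, hx⟩
      by_cases h : MDB Ap Bp F Gn x
      · exact ⟨s(Gn x, x), (hmemM _).2 (Or.inl ⟨x, (hB1mem x).2 h, rfl⟩),
          Sym2.mem_mk_right (Gn x) x⟩
      · have h2 : ¬ ∀ a : V, Ap a → F a ≠ x := fun hall => h (MDB.base x hBp hall)
        push_neg at h2
        obtain ⟨a, haAp, hFa⟩ := h2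
        have h3 : ∀ b ∈ B1, Gn b ≠ a := by
          intro b hb heq
          exact h (MDB.step b x ((hB1mem b).1 hb) hBp (heq ▸ haAp) (by rw [heq, hFa]))
        refine ⟨s(a, F a), (hmemM _).2 (Or.inr ⟨a, (hAFmem a).2 ⟨haAp, h3⟩, rfl⟩), ?_⟩
        rw [hFa]; exact Sym2.mem_mk_right a x
  -- sum bound
  have hpd : (M : Set (Sym2 V)).PairwiseDisjoint endp := by
    intro e₁ h₁ e₂ h₂ hne
    simp only [Function.onFun]
    rw [Finset.disjoint_left]
    intro x hx₁ hx₂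
    simp only [endp, Finset.mem_filter] at hx₁ hx₂
    exact hdisjM e₁ h₁ e₂ h₂ hne x ⟨hx₁.2, hx₂.2⟩
  have hsum : ∑ v, y v ≤ ∑ e ∈ M, w e := by
    calc ∑ v, y v = ∑ v ∈ univ.filter (fun v => y v ≠ 0), y v :=
          (Finset.sum_filter_ne_zero _).symm
      _ ≤ ∑ x ∈ M.biUnion endp, y x := by
          apply Finset.sum_le_sum_of_subset
          intro x hx
          rw [mem_filter] at hx
          obtain ⟨e, he, hxe⟩ := hsat x (Nat.pos_of_ne_zero hx.2)
          exact Finset.mem_biUnion.2 ⟨e, he, by simp [endp, hxe]⟩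
      _ = ∑ e ∈ M, ∑ x ∈ endp e, y x := Finset.sum_biUnion hpd
      _ = ∑ e ∈ M, w e := by
          apply Finset.sum_congr rfl
          intro e he
          obtain ⟨u, v, rfl, hadj, hw⟩ := htight e he
          rw [sum_endp y hadj.ne, hw]
  exact ⟨M, hMedge, hdisjM, hsum⟩

end EgervaryAux2

/-- Egerváry's theorem: in a bipartite graph with edge weights `w : E → ℕ`, the
maximum weight of a matching equals the minimum value of a `w`-vertex cover. -/
theorem egervary {V : Type*} [Fintype V] [DecidableEq V]
    (G : SimpleGraph V)
    (hbip : ∃ s : Set V, ∀ u v : V, G.Adj u v → (u ∈ s ∧ v ∉ s) ∨ (u ∉ s ∧ v ∈ s))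
    (w : Sym2 V → ℕ) :
    ∃ vopt : ℕ,
      IsGreatest {k : ℕ | ∃ M : Finset (Sym2 V),
          (∀ e ∈ M, e ∈ G.edgeSet) ∧
          (∀ e₁ ∈ M, ∀ e₂ ∈ M, e₁ ≠ e₂ → ∀ v : V, ¬(v ∈ e₁ ∧ v ∈ e₂)) ∧
          k = ∑ e ∈ M, w e} vopt ∧
      IsLeast {k : ℕ | ∃ y : V → ℕ,
          (∀ u v : V, G.Adj u v → w s(u, v) ≤ y u + y v) ∧
          k = ∑ v : V, y v} vopt := by
  classical
  obtain ⟨s, hs⟩ := hbip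
  set Cset := {k : ℕ | ∃ y : V → ℕ,
      (∀ u v : V, G.Adj u v → w s(u, v) ≤ y u + y v) ∧ k = ∑ v : V, y v} with hCset
  have hCne : Cset.Nonempty := by
    refine ⟨∑ _v : V, Finset.univ.sup w, fun _ => Finset.univ.sup w, fun u v _ => ?_, rfl⟩
    exact le_trans (Finset.le_sup (Finset.mem_univ _)) (Nat.le_add_right _ _)
  set vopt := sInf Cset with hvopt
  have hmem : vopt ∈ Cset := Nat.sInf_mem hCne
  obtain ⟨y, hy, hyval⟩ := hmem
  have hmin : ∀ z : V → ℕ, (∀ u v : V, G.Adj u v → w s(u, v) ≤ z u + z v) →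
      ∑ v, y v ≤ ∑ v, z v := by
    intro z hz
    rw [← hyval]
    exact Nat.sInf_le ⟨z, hz, rfl⟩
  obtain ⟨M, hM1, hM2, hM3⟩ := exists_opt_matching G s hs w y hy hmin
  have hMle : ∑ e ∈ M, w e ≤ ∑ v, y v := weak_duality G w M hM1 hM2 y hy
  have hMeq : ∑ e ∈ M, w e = vopt := by omega
  refine ⟨vopt, ⟨⟨M, hM1, hM2, hMeq.symm⟩, ?_⟩, ⟨⟨y, hy, hyval⟩, ?_⟩⟩
  · rintro k ⟨M', h1, h2, rfl⟩
    calc ∑ e ∈ M', w e ≤ ∑ v, y v := weak_duality G w M' h1 h2 y hy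
      _ = vopt := hyval.symm
  · rintro k ⟨z, hz, rfl⟩
    exact Nat.sInf_le ⟨z, hz, rfl⟩
end

section
/- (König's theorem) Let G = (V,E) be a bipartite graph. Then the maximum cardinality of a matching of G equals the minimum cardinality of a vertex cover of G. -/
open Finset

/-- Key lemma: if `U` is a minimum vertex cover of a bipartite graph `G` with parts `s`, `sᶜ`,
then the vertices of `U` lying in `s` can be matched injectively to neighbors outside `s`
and outside `U`. Proved via Hall's marriage theorem. -/
private lemma konig_cover_aux {V : Type*} [Fintype V] [DecidableEq V] (G : SimpleGraph V)
    (s : Set V) (_hbip : ∀ u v : V, G.Adj u v → (u ∈ s ∧ v ∉ s) ∨ (u ∉ s ∧ v ∈ s))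
    (U : Finset V) (hcov : ∀ e ∈ G.edgeSet, ∃ v ∈ U, v ∈ e)
    (hmin : ∀ U' : Finset V, (∀ e ∈ G.edgeSet, ∃ v ∈ U', v ∈ e) → U.card ≤ U'.card) :
    ∃ f : {a : V // a ∈ U ∧ a ∈ s} → V,
      Function.Injective f ∧ ∀ a, G.Adj a.1 (f a) ∧ f a ∉ s ∧ f a ∉ U := by
  classical
  set t : {a : V // a ∈ U ∧ a ∈ s} → Finset V :=
    fun a => univ.filter (fun b => G.Adj a.1 b ∧ b ∉ s ∧ b ∉ U) with ht
  have hall : ∀ s' : Finset {a : V // a ∈ U ∧ a ∈ s}, s'.card ≤ (s'.biUnion t).card := by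
    intro s'
    by_contra hlt
    push_neg at hlt
    set img : Finset V := s'.image (fun a => a.1) with himg
    set N : Finset V := s'.biUnion t with hN
    set W : Finset V := (U \ img) ∪ N with hW
    have himgU : img ⊆ U := by
      intro x hx
      obtain ⟨a, _, rfl⟩ := Finset.mem_image.mp hx
      exact a.2.1
    have himgs : ∀ x ∈ img, x ∈ s := by
      intro x hx
      obtain ⟨a, _, rfl⟩ := Finset.mem_image.mp hx
      exact a.2.2
    have hWcov : ∀ e ∈ G.edgeSet, ∃ v ∈ W, v ∈ e := by
      have key : ∀ u v : V, G.Adj u v → u ∈ s → v ∉ s → ∃ x ∈ W, x = u ∨ x = v := by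
        intro u v hadj hu hv
        obtain ⟨w, hwU, hwe⟩ := hcov s(u, v) (G.mem_edgeSet.mpr hadj)
        rw [Sym2.mem_iff] at hwe
        rcases hwe with rfl | rfl
        · -- covering vertex is u
          by_cases hvU : v ∈ U
          · refine ⟨v, ?_, Or.inr rfl⟩
            have hvimg : v ∉ img := fun h => hv (himgs v h)
            exact Finset.mem_union.mpr (Or.inl (Finset.mem_sdiff.mpr ⟨hvU, hvimg⟩))
          · by_cases huimg : w ∈ img
            · obtain ⟨a, haS, ha⟩ := Finset.mem_image.mp huimg
              refine ⟨v, ?_, Or.inr rfl⟩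
              refine Finset.mem_union.mpr (Or.inr (Finset.mem_biUnion.mpr ⟨a, haS, ?_⟩))
              simp only [ht, Finset.mem_filter, Finset.mem_univ, true_and]
              exact ⟨ha ▸ hadj, hv, hvU⟩
            · exact ⟨w, Finset.mem_union.mpr
                (Or.inl (Finset.mem_sdiff.mpr ⟨hwU, huimg⟩)), Or.inl rfl⟩
        · -- covering vertex is v
          refine ⟨w, ?_, Or.inr rfl⟩
          have hvimg : w ∉ img := fun h => hv (himgs w h)
          exact Finset.mem_union.mpr (Or.inl (Finset.mem_sdiff.mpr ⟨hwU, hvimg⟩))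
      intro e he
      induction e using Sym2.ind with
      | _ u v =>
        have hadj : G.Adj u v := G.mem_edgeSet.mp he
        rcases _hbip u v hadj with ⟨hu, hv⟩ | ⟨hu, hv⟩
        · obtain ⟨x, hxW, hx⟩ := key u v hadj hu hv
          exact ⟨x, hxW, by rcases hx with rfl | rfl <;> simp⟩
        · obtain ⟨x, hxW, hx⟩ := key v u hadj.symm hv hu
          exact ⟨x, hxW, by rcases hx with rfl | rfl <;> simp⟩
    have h1 : img.card = s'.card := Finset.card_image_of_injective _ Subtype.val_injective
    have h2 : (U \ img).card = U.card - img.card := Finset.card_sdiff_of_subset himgU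
    have h3 : W.card ≤ (U \ img).card + N.card := Finset.card_union_le _ _
    have h4 : img.card ≤ U.card := Finset.card_le_card himgU
    have h5 := hmin W hWcov
    omega
  obtain ⟨f, hfinj, hf⟩ := (Finset.all_card_le_biUnion_card_iff_exists_injective t).mp hall
  refine ⟨f, hfinj, fun a => ?_⟩
  have := hf a
  simp only [ht, Finset.mem_filter, Finset.mem_univ, true_and] at this
  exact this

/-- Weak duality: every matching is at most as large as every vertex cover. -/
private lemma konig_weak {V : Type*} [Fintype V] [DecidableEq V] (G : SimpleGraph V)
    (M : Finset (Sym2 V)) (hM : ∀ e ∈ M, e ∈ G.edgeSet)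
    (hMd : ∀ e₁ ∈ M, ∀ e₂ ∈ M, e₁ ≠ e₂ → ∀ v : V, ¬(v ∈ e₁ ∧ v ∈ e₂))
    (U : Finset V) (hU : ∀ e ∈ G.edgeSet, ∃ v ∈ U, v ∈ e) :
    M.card ≤ U.card := by
  classical
  rcases M.eq_empty_or_nonempty with rfl | ⟨e0, he0⟩
  · simp
  have hne : Nonempty V := by
    obtain ⟨v, -, -⟩ := hU e0 (hM e0 he0)
    exact ⟨v⟩
  set f : Sym2 V → V :=
    fun e => if h : ∃ v ∈ U, v ∈ e then h.choose else Classical.arbitrary V with hfdef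
  have hmem : ∀ e ∈ M, f e ∈ U ∧ f e ∈ e := by
    intro e he
    have h : ∃ v ∈ U, v ∈ e := hU e (hM e he)
    simp only [hfdef, dif_pos h]
    exact ⟨h.choose_spec.1, h.choose_spec.2⟩
  apply Finset.card_le_card_of_injOn f
  · intro e he
    exact (hmem e he).1
  · intro e₁ h1 e₂ h2 heq
    by_contra hne'
    exact hMd e₁ h1 e₂ h2 hne' (f e₁)
      ⟨(hmem e₁ h1).2, heq ▸ (hmem e₂ h2).2⟩

/-- König's theorem: in a bipartite graph, the maximum cardinality of a matching
equals the minimum cardinality of a vertex cover. -/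
theorem konig {V : Type*} [Fintype V] [DecidableEq V]
    (G : SimpleGraph V)
    (hbip : ∃ s : Set V, ∀ u v : V, G.Adj u v → (u ∈ s ∧ v ∉ s) ∨ (u ∉ s ∧ v ∈ s)) :
    ∃ vopt : ℕ,
      IsGreatest {k : ℕ | ∃ M : Finset (Sym2 V),
          (∀ e ∈ M, e ∈ G.edgeSet) ∧
          (∀ e₁ ∈ M, ∀ e₂ ∈ M, e₁ ≠ e₂ → ∀ v : V, ¬(v ∈ e₁ ∧ v ∈ e₂)) ∧
          k = M.card} vopt ∧
      IsLeast {k : ℕ | ∃ U : Finset V,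
          (∀ e ∈ G.edgeSet, ∃ v ∈ U, v ∈ e) ∧
          k = U.card} vopt := by
  classical
  obtain ⟨s, hbip⟩ := hbip
  set coverSet : Set ℕ := {k : ℕ | ∃ U : Finset V,
      (∀ e ∈ G.edgeSet, ∃ v ∈ U, v ∈ e) ∧ k = U.card} with hcs
  have hcovne : coverSet.Nonempty := by
    refine ⟨(univ : Finset V).card, univ, fun e he => ?_, rfl⟩
    induction e using Sym2.ind with
    | _ u v => exact ⟨u, mem_univ u, by simp⟩
  set vopt := sInf coverSet with hvopt
  obtain ⟨U, hUcov, hUcard⟩ : vopt ∈ coverSet := Nat.sInf_mem hcovne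
  have hUmin : ∀ U' : Finset V, (∀ e ∈ G.edgeSet, ∃ v ∈ U', v ∈ e) → U.card ≤ U'.card := by
    intro U' h
    have h2 : vopt ≤ U'.card := Nat.sInf_le ⟨U', h, rfl⟩
    omega
  -- Hall applied to both sides of the bipartition
  obtain ⟨f, hfinj, hf⟩ := konig_cover_aux G s hbip U hUcov hUmin
  have hbip' : ∀ u v : V, G.Adj u v → (u ∈ sᶜ ∧ v ∉ sᶜ) ∨ (u ∉ sᶜ ∧ v ∈ sᶜ) := by
    intro u v h
    rcases hbip u v h with ⟨h1, h2⟩ | ⟨h1, h2⟩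
    · right; simp [Set.mem_compl_iff, h1, h2]
    · left; simp [Set.mem_compl_iff, h1, h2]
  obtain ⟨g, hginj, hg⟩ := konig_cover_aux G sᶜ hbip' U hUcov hUmin
  -- basic facts
  have hfA : ∀ a : {a : V // a ∈ U ∧ a ∈ s},
      G.Adj a.1 (f a) ∧ f a ∉ s ∧ f a ∉ U := hf
  have hgB : ∀ b : {b : V // b ∈ U ∧ b ∈ sᶜ},
      G.Adj b.1 (g b) ∧ g b ∈ s ∧ g b ∉ U := by
    intro b
    obtain ⟨h1, h2, h3⟩ := hg b
    exact ⟨h1, by simpa using h2, h3⟩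
  set M : Finset (Sym2 V) :=
    (univ : Finset {a : V // a ∈ U ∧ a ∈ s}).image (fun a => s(a.1, f a)) ∪
    (univ : Finset {b : V // b ∈ U ∧ b ∈ sᶜ}).image (fun b => s(b.1, g b)) with hMdef
  -- vertex membership characterizations
  have memA : ∀ (a : {a : V // a ∈ U ∧ a ∈ s}) (v : V), v ∈ s(a.1, f a) →
      (v ∈ s ∧ v = a.1) ∨ (v ∉ s ∧ v = f a) := by
    intro a v hv
    rw [Sym2.mem_iff] at hv
    rcases hv with rfl | rfl
    · exact Or.inl ⟨a.2.2, rfl⟩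
    · exact Or.inr ⟨(hfA a).2.1, rfl⟩
  have memB : ∀ (b : {b : V // b ∈ U ∧ b ∈ sᶜ}) (v : V), v ∈ s(b.1, g b) →
      (v ∈ s ∧ v = g b) ∨ (v ∉ s ∧ v = b.1) := by
    intro b v hv
    rw [Sym2.mem_iff] at hv
    rcases hv with rfl | rfl
    · exact Or.inr ⟨b.2.2, rfl⟩
    · exact Or.inl ⟨(hgB b).2.1, rfl⟩
  -- no common vertex between an A-edge and a B-edge
  have hAB : ∀ (a : {a : V // a ∈ U ∧ a ∈ s}) (b : {b : V // b ∈ U ∧ b ∈ sᶜ}) (v : V),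
      ¬(v ∈ s(a.1, f a) ∧ v ∈ s(b.1, g b)) := by
    rintro a b v ⟨hv1, hv2⟩
    rcases memA a v hv1 with ⟨hvs, rfl⟩ | ⟨hvs, rfl⟩
    · rcases memB b _ hv2 with ⟨-, h⟩ | ⟨hns, -⟩
      · exact (hgB b).2.2 (h ▸ a.2.1)
      · exact hns hvs
    · rcases memB b _ hv2 with ⟨hs', -⟩ | ⟨-, h⟩
      · exact hvs hs'
      · exact (hfA a).2.2 (h ▸ b.2.1)
  -- matching properties
  have hMedge : ∀ e ∈ M, e ∈ G.edgeSet := by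
    intro e he
    rcases Finset.mem_union.mp he with h | h
    · obtain ⟨a, -, rfl⟩ := Finset.mem_image.mp h
      exact G.mem_edgeSet.mpr (hfA a).1
    · obtain ⟨b, -, rfl⟩ := Finset.mem_image.mp h
      exact G.mem_edgeSet.mpr (hgB b).1
  have hMdisj : ∀ e₁ ∈ M, ∀ e₂ ∈ M, e₁ ≠ e₂ → ∀ v : V, ¬(v ∈ e₁ ∧ v ∈ e₂) := by
    rintro e₁ he₁ e₂ he₂ hne v ⟨hv1, hv2⟩
    rcases Finset.mem_union.mp he₁ with h1 | h1 <;>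
      rcases Finset.mem_union.mp he₂ with h2 | h2
    · obtain ⟨a, -, rfl⟩ := Finset.mem_image.mp h1
      obtain ⟨a', -, rfl⟩ := Finset.mem_image.mp h2
      rcases memA a v hv1 with ⟨hvs, rfl⟩ | ⟨hvs, rfl⟩
      · rcases memA a' _ hv2 with ⟨-, h⟩ | ⟨hns, -⟩
        · exact hne (by rw [Subtype.ext h])
        · exact hns hvs
      · rcases memA a' _ hv2 with ⟨hs', -⟩ | ⟨-, h⟩
        · exact hvs hs'
        · exact hne (by rw [hfinj h])
    · obtain ⟨a, -, rfl⟩ := Finset.mem_image.mp h1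
      obtain ⟨b, -, rfl⟩ := Finset.mem_image.mp h2
      exact hAB a b v ⟨hv1, hv2⟩
    · obtain ⟨b, -, rfl⟩ := Finset.mem_image.mp h1
      obtain ⟨a, -, rfl⟩ := Finset.mem_image.mp h2
      exact hAB a b v ⟨hv2, hv1⟩
    · obtain ⟨b, -, rfl⟩ := Finset.mem_image.mp h1
      obtain ⟨b', -, rfl⟩ := Finset.mem_image.mp h2
      rcases memB b v hv1 with ⟨hvs, rfl⟩ | ⟨hvs, rfl⟩
      · rcases memB b' _ hv2 with ⟨-, h⟩ | ⟨hns, -⟩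
        · exact hne (by rw [hginj h])
        · exact hns hvs
      · rcases memB b' _ hv2 with ⟨hs', -⟩ | ⟨-, h⟩
        · exact hvs hs'
        · exact hne (by rw [Subtype.ext h])
  -- injectivity of the edge-building maps
  have hinjA : Function.Injective
      (fun a : {a : V // a ∈ U ∧ a ∈ s} => s(a.1, f a)) := by
    intro a a' h
    have h' : s(a.1, f a) = s(a'.1, f a') := h
    have ha : (a.1 : V) ∈ s(a'.1, f a') := by
      rw [← h']; exact Sym2.mem_mk_left _ _
    rcases memA a' a.1 ha with ⟨-, h2⟩ | ⟨hns, -⟩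
    · exact Subtype.ext h2
    · exact absurd a.2.2 hns
  have hinjB : Function.Injective
      (fun b : {b : V // b ∈ U ∧ b ∈ sᶜ} => s(b.1, g b)) := by
    intro b b' h
    have h' : s(b.1, g b) = s(b'.1, g b') := h
    have hb : (b.1 : V) ∈ s(b'.1, g b') := by
      rw [← h']; exact Sym2.mem_mk_left _ _
    rcases memB b' b.1 hb with ⟨hs', -⟩ | ⟨-, h2⟩
    · exact absurd hs' b.2.2
    · exact Subtype.ext h2
  -- cardinality of M
  have hdisj : Disjoint
      ((univ : Finset {a : V // a ∈ U ∧ a ∈ s}).image (fun a => s(a.1, f a)))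
      ((univ : Finset {b : V // b ∈ U ∧ b ∈ sᶜ}).image (fun b => s(b.1, g b))) := by
    rw [Finset.disjoint_left]
    intro e h1 h2
    obtain ⟨a, -, rfl⟩ := Finset.mem_image.mp h1
    obtain ⟨b, -, hb⟩ := Finset.mem_image.mp h2
    exact hAB a b a.1 ⟨Sym2.mem_mk_left _ _, hb ▸ Sym2.mem_mk_left _ _⟩
  have hcardM : M.card = U.card := by
    rw [hMdef, Finset.card_union_of_disjoint hdisj,
      Finset.card_image_of_injective _ hinjA, Finset.card_image_of_injective _ hinjB,
      Finset.card_univ, Finset.card_univ]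
    have hA : Fintype.card {a : V // a ∈ U ∧ a ∈ s} = (U.filter (fun x => x ∈ s)).card := by
      rw [Fintype.card_subtype]
      congr 1
      ext x
      simp [and_comm]
    have hB : Fintype.card {b : V // b ∈ U ∧ b ∈ sᶜ} =
        (U.filter (fun x => x ∉ s)).card := by
      rw [Fintype.card_subtype]
      congr 1
      ext x
      simp [Set.mem_compl_iff, and_comm]
    rw [hA, hB]
    exact Finset.card_filter_add_card_filter_not (p := fun x => x ∈ s)
  refine ⟨vopt, ⟨⟨M, hMedge, hMdisj, by omega⟩, ?_⟩, ⟨⟨U, hUcov, hUcard⟩, ?_⟩⟩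
  · rintro k ⟨M', h1, h2, rfl⟩
    have := konig_weak G M' h1 h2 U hUcov
    omega
  · rintro k hk
    exact Nat.sInf_le hk
end
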